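/- arXiv:2604.19861 — 6 statements merged into one kernel-verified Lean document; each statement's English description precedes it below -/
import Mathlib

section
/- Let H be a complex Hilbert space, let A and B be bounded self-adjoint operators on H, and let f : ℝ → ℝ be Lipschitz on a set containing the spectra of both A and B (in particular f is continuous there, so f(A) and f(B) are defined by the continuous functional calculus). If A − B is Hilbert–Schmidt, then f(A) − f(B) is Hilbert–Schmidt. -/
noncomputable section

universe u v w

set_option linter.unusedSectionVars false

open scoped ComplexConjugate

local notation "⟪" x ", " y "⟫" => @inner ℂ _ _ x y

variable {H : Type*} [NormedAddCommGroup H] [InnerProductSpace ℂ H]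

lemma BS.norm_sq_complex (z : ℂ) : (‖z‖ : ℝ) ^ 2 = (z * conj z).re := by
  rw [Complex.mul_conj]
  rw [Complex.ofReal_re]
  simp [Complex.normSq_eq_norm_sq]

/-- Expansion of an element of the span of a finite orthonormal family. -/
lemma BS.sum_inner_smul_eq {κ : Type*} [Fintype κ] {v : κ → H} (hv : Orthonormal ℂ v)
    {x : H} (hx : x ∈ Submodule.span ℂ (Set.range v)) :
    ∑ j, ⟪v j, x⟫ • v j = x := by
  classical
  induction hx using Submodule.span_induction with
  | mem y hy =>
    obtain ⟨j₀, rfl⟩ := hy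
    rw [Finset.sum_eq_single j₀]
    · rw [orthonormal_iff_ite.mp hv]; simp
    · intro j _ hj
      rw [orthonormal_iff_ite.mp hv]; simp [hj]
    · simp
  | zero => simp
  | add y z _ _ hy hz =>
    simp only [inner_add_right, add_smul, Finset.sum_add_distrib, hy, hz]
  | smul c y _ hy =>
    simp only [inner_smul_right, mul_smul, ← Finset.smul_sum, hy]

lemma BS.inner_eq_sum {κ : Type*} [Fintype κ] {v : κ → H} (hv : Orthonormal ℂ v)
    (x : H) {y : H} (hy : y ∈ Submodule.span ℂ (Set.range v)) :
    ⟪x, y⟫ = ∑ j, ⟪x, v j⟫ * ⟪v j, y⟫ := by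
  conv_lhs => rw [← BS.sum_inner_smul_eq hv hy]
  simp only [inner_sum, inner_smul_right]
  exact Finset.sum_congr rfl fun j _ => mul_comm _ _

lemma BS.norm_sq_eq_sum {κ : Type*} [Fintype κ] {v : κ → H} (hv : Orthonormal ℂ v)
    {x : H} (hx : x ∈ Submodule.span ℂ (Set.range v)) :
    ‖x‖ ^ 2 = ∑ j, ‖⟪v j, x⟫‖ ^ 2 := by
  have h := BS.inner_eq_sum hv x hx
  have h2 : Complex.re ⟪x, x⟫ = ‖x‖ ^ 2 := inner_self_eq_norm_sq (𝕜 := ℂ) x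
  rw [← h2, h, Complex.re_sum]
  refine Finset.sum_congr rfl fun j _ => ?_
  rw [BS.norm_sq_complex, inner_conj_symm, mul_comm]

section Op
variable [CompleteSpace H]

lemma BS.mem_spectrum_of_eigen {T : H →L[ℂ] H} {v : H} (hv : v ≠ 0)
    {lam : ℝ} (h : T v = (lam : ℂ) • v) : lam ∈ spectrum ℝ T := by
  rw [← spectrum.algebraMap_mem_iff ℂ, spectrum.mem_iff]
  intro hU
  have hLv : (algebraMap ℂ (H →L[ℂ] H) (algebraMap ℝ ℂ lam) - T) v = 0 := by
    simp only [Algebra.algebraMap_eq_smul_one, ContinuousLinearMap.sub_apply,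
      ContinuousLinearMap.smul_apply, ContinuousLinearMap.one_apply, h]
    simp [algebraMap_smul]
  have hinj := congrArg (fun (S : H →L[ℂ] H) => S v) hU.unit.inv_mul
  simp only [ContinuousLinearMap.mul_apply, IsUnit.unit_spec, ContinuousLinearMap.one_apply] at hinj
  rw [hLv, map_zero] at hinj
  exact hv hinj.symm

lemma BS.spectrum_subset_Icc [Nontrivial H] (T : H →L[ℂ] H) :
    spectrum ℝ T ⊆ Set.Icc (-‖T‖) ‖T‖ := by
  intro x hx
  have hx' : (algebraMap ℝ ℂ x) ∈ spectrum ℂ T := spectrum.algebraMap_mem ℂ hx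
  have hb := spectrum.subset_closedBall_norm (𝕜 := ℂ) T hx'
  simp only [Metric.mem_closedBall, dist_zero_right] at hb
  have : |x| ≤ ‖T‖ := by
    simpa [Complex.norm_real, Real.norm_eq_abs] using hb
  exact abs_le.mp this

lemma BS.exists_poly (g : ℝ → ℝ) (hg : Continuous g) (M : ℝ) {ε : ℝ} (hε : 0 < ε) :
    ∃ p : Polynomial ℝ, ∀ x ∈ Set.Icc (-M) M, |g x - p.eval x| ≤ ε := by
  have hcl := polynomialFunctions_closure_eq_top (-M) M
  set gc : C(Set.Icc (-M) M, ℝ) := ⟨fun x => g x, hg.comp continuous_subtype_val⟩ with hgc_def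
  have hmem : gc ∈ closure ((polynomialFunctions (Set.Icc (-M) M)) : Set C(Set.Icc (-M) M, ℝ)) := by
    rw [← Subalgebra.topologicalClosure_coe, hcl]
    trivial
  obtain ⟨q, hq, hdist⟩ := Metric.mem_closure_iff.mp hmem ε hε
  rw [polynomialFunctions_coe] at hq
  obtain ⟨p, rfl⟩ := hq
  refine ⟨p, fun x hx => ?_⟩
  have h1 := ContinuousMap.dist_apply_le_dist (f := gc)
    (g := Polynomial.toContinuousMapOnAlgHom (Set.Icc (-M) M) p) ⟨x, hx⟩
  have : dist (g x) (p.eval x) ≤ ε := by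
    simpa [hgc_def, Polynomial.toContinuousMapOnAlgHom_apply, Polynomial.toContinuousMapOn_apply,
      Polynomial.toContinuousMap_apply] using h1.trans hdist.le
  rwa [Real.dist_eq] at this

end Op

section Eigen
variable [CompleteSpace H] [Nontrivial H]

lemma BS.pow_apply_eigen {T : H →L[ℂ] H} {v : H} {lam : ℝ}
    (hv : T v = (lam : ℂ) • v) (n : ℕ) : (T ^ n) v = ((lam : ℂ) ^ n) • v := by
  induction n with
  | zero => simp
  | succ n ih =>
    rw [pow_succ, ContinuousLinearMap.mul_apply, hv, map_smul, ih, smul_smul, pow_succ, mul_comm]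

lemma BS.aeval_apply_eigen {T : H →L[ℂ] H} {v : H} {lam : ℝ}
    (hv : T v = (lam : ℂ) • v) (p : Polynomial ℝ) :
    (Polynomial.aeval T p) v = ((p.eval lam : ℝ) : ℂ) • v := by
  induction p using Polynomial.induction_on' with
  | add p q hp hq =>
    simp only [map_add, ContinuousLinearMap.add_apply, hp, hq, Polynomial.eval_add,
      Complex.ofReal_add, add_smul]
  | monomial n r =>
    rw [Polynomial.aeval_monomial, ContinuousLinearMap.mul_apply, BS.pow_apply_eigen hv,
      map_smul, Polynomial.eval_monomial]
    rw [Algebra.algebraMap_eq_smul_one, ContinuousLinearMap.smul_apply,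
      ContinuousLinearMap.one_apply]
    rw [smul_comm, ← algebraMap_smul ℂ r ((lam : ℂ) ^ n • v), smul_smul]
    push_cast
    rw [Complex.coe_algebraMap]

lemma BS.cfc_apply_eigen {T : H →L[ℂ] H} (hT : IsSelfAdjoint T)
    {g : ℝ → ℝ} (hg : Continuous g) {v : H} {lam : ℝ}
    (hv : T v = (lam : ℂ) • v) (hlam : lam ∈ spectrum ℝ T) :
    cfc g T v = (g lam : ℂ) • v := by
  have hIcc : lam ∈ Set.Icc (-‖T‖) ‖T‖ := BS.spectrum_subset_Icc T hlam
  have key : ∀ ε : ℝ, 0 < ε → ‖cfc g T v - (g lam : ℂ) • v‖ ≤ ε * ‖v‖ + ε * ‖v‖ := by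
    intro ε hε
    obtain ⟨p, hp⟩ := BS.exists_poly g hg ‖T‖ hε
    have hgc : ContinuousOn g (spectrum ℝ T) := hg.continuousOn
    have hpc : ContinuousOn (fun x => Polynomial.eval x p) (spectrum ℝ T) :=
      (Polynomial.continuous_aeval p).continuousOn
    have h1 : ‖cfc g T - cfc (fun x => Polynomial.eval x p) T‖ ≤ ε := by
      rw [← cfc_sub (fun x => g x) (fun x => Polynomial.eval x p) T hgc hpc]
      refine norm_cfc_le hε.le fun x hx => ?_
      have := hp x (BS.spectrum_subset_Icc T hx)
      simpa [Real.norm_eq_abs] using this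
    have h2 : cfc (fun x => Polynomial.eval x p) T v = ((p.eval lam : ℝ) : ℂ) • v := by
      rw [cfc_polynomial p T hT]
      exact BS.aeval_apply_eigen hv p
    have hsplit : cfc g T v - (g lam : ℂ) • v
        = (cfc g T - cfc (fun x => Polynomial.eval x p) T) v
          + (((p.eval lam : ℝ) : ℂ) - ((g lam : ℝ) : ℂ)) • v := by
      rw [ContinuousLinearMap.sub_apply, h2, sub_smul]
      abel
    rw [hsplit]
    refine (norm_add_le _ _).trans (add_le_add ?_ ?_)
    · exact (ContinuousLinearMap.le_opNorm _ v).trans (by gcongr)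
    · rw [norm_smul]
      have : ‖((p.eval lam : ℝ) : ℂ) - ((g lam : ℝ) : ℂ)‖ ≤ ε := by
        rw [← Complex.ofReal_sub, Complex.norm_real, Real.norm_eq_abs, abs_sub_comm]
        exact hp lam hIcc
      exact mul_le_mul_of_nonneg_right this (norm_nonneg v)
  have hzero : ‖cfc g T v - (g lam : ℂ) • v‖ ≤ 0 := by
    refine le_of_forall_pos_le_add fun δ hδ => ?_
    have hδ' : 0 < δ / (2 * ‖v‖ + 1) := by positivity
    have := key _ hδ'
    rw [zero_add]
    refine this.trans ?_
    rw [← add_mul]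
    have h2 : δ / (2 * ‖v‖ + 1) + δ / (2 * ‖v‖ + 1) = δ * (2 / (2 * ‖v‖ + 1)) := by ring
    rw [h2]
    calc δ * (2 / (2 * ‖v‖ + 1)) * ‖v‖ = δ * (2 * ‖v‖ / (2 * ‖v‖ + 1)) := by ring
    _ ≤ δ * 1 := by
        gcongr
        rw [div_le_one (by positivity)]
        linarith
    _ = δ := mul_one δ
  rw [← sub_eq_zero]
  exact norm_le_zero_iff.mp hzero

end Eigen

section Core

lemma BS.core_identity {κu κv κw : Type*} [Fintype κu] [Fintype κv] [Fintype κw]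
    {u : κu → H} {v : κv → H} {w : κw → H}
    (hu : Orthonormal ℂ u) (hv : Orthonormal ℂ v) (hw : Orthonormal ℂ w)
    (huv : ∀ i, u i ∈ Submodule.span ℂ (Set.range v))
    (huw : ∀ i, u i ∈ Submodule.span ℂ (Set.range w))
    (hvw : ∀ j, v j ∈ Submodule.span ℂ (Set.range w))
    (hvu : ∀ j, v j ∈ Submodule.span ℂ (Set.range u))
    (X Y : H →L[ℂ] H) (lam : κv → ℝ) (mu : κw → ℝ)
    (hX : ∀ j, X (v j) = (lam j : ℂ) • v j) (hY : ∀ k, Y (w k) = (mu k : ℂ) • w k) :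
    ∑ i, ‖(X - Y) (u i)‖ ^ 2 = ∑ k, ∑ j, (lam j - mu k) ^ 2 * ‖⟪w k, v j⟫‖ ^ 2 := by
  classical
  have hite_v := orthonormal_iff_ite.mp hv
  have hite_w := orthonormal_iff_ite.mp hw
  -- expansion of X (u i)
  have hXu : ∀ i, X (u i) = ∑ j, ⟪v j, u i⟫ • ((lam j : ℂ) • v j) := by
    intro i
    conv_lhs => rw [← BS.sum_inner_smul_eq hv (huv i)]
    rw [map_sum]
    exact Finset.sum_congr rfl fun j _ => by rw [map_smul, hX]
  have hYu : ∀ i, Y (u i) = ∑ k, ⟪w k, u i⟫ • ((mu k : ℂ) • w k) := by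
    intro i
    conv_lhs => rw [← BS.sum_inner_smul_eq hw (huw i)]
    rw [map_sum]
    exact Finset.sum_congr rfl fun k _ => by rw [map_smul, hY]
  -- the auxiliary vectors y k
  set z : κw → κv → ℂ := fun k j => (((lam j : ℂ)) - ((mu k : ℂ))) * ⟪w k, v j⟫ with hz
  set y : κw → H := fun k => ∑ j, (starRingEnd ℂ) (z k j) • v j with hy
  have hy_mem_u : ∀ k, y k ∈ Submodule.span ℂ (Set.range u) :=
    fun k => Submodule.sum_mem _ fun j _ => Submodule.smul_mem _ _ (hvu j)
  have hy_mem_v : ∀ k, y k ∈ Submodule.span ℂ (Set.range v) :=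
    fun k => Submodule.sum_mem _ fun j _ =>
      Submodule.smul_mem _ _ (Submodule.subset_span (Set.mem_range_self j))
  -- entry formula
  have hentry : ∀ i k, ⟪w k, (X - Y) (u i)⟫ = ⟪y k, u i⟫ := by
    intro i k
    have h1 : ⟪w k, X (u i)⟫ = ∑ j, ⟪v j, u i⟫ * ((lam j : ℂ) * ⟪w k, v j⟫) := by
      rw [hXu i, inner_sum]
      exact Finset.sum_congr rfl fun j _ => by rw [inner_smul_right, inner_smul_right]
    have h2 : ⟪w k, Y (u i)⟫ = (mu k : ℂ) * ⟪w k, u i⟫ := by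
      rw [hYu i, inner_sum, Finset.sum_eq_single k]
      · rw [inner_smul_right, inner_smul_right, hite_w]
        simp [mul_comm]
      · intro k' _ hk'
        rw [inner_smul_right, inner_smul_right, hite_w]
        simp [Ne.symm hk']
      · simp
    have h3 : ⟪w k, u i⟫ = ∑ j, ⟪w k, v j⟫ * ⟪v j, u i⟫ := BS.inner_eq_sum hv (w k) (huv i)
    have h4 : ⟪y k, u i⟫ = ∑ j, z k j * ⟪v j, u i⟫ := by
      rw [hy]
      simp only [sum_inner, inner_smul_left, starRingEnd_self_apply]
    rw [ContinuousLinearMap.sub_apply, inner_sub_right, h1, h2, h3, h4, Finset.mul_sum,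
      ← Finset.sum_sub_distrib]
    refine Finset.sum_congr rfl fun j _ => ?_
    rw [hz]
    ring
  -- membership of (X - Y) (u i) in span w
  have hmem : ∀ i, (X - Y) (u i) ∈ Submodule.span ℂ (Set.range w) := by
    intro i
    rw [ContinuousLinearMap.sub_apply]
    refine Submodule.sub_mem _ ?_ ?_
    · rw [hXu i]
      exact Submodule.sum_mem _ fun j _ => Submodule.smul_mem _ _
        (Submodule.smul_mem _ _ (hvw j))
    · rw [hYu i]
      exact Submodule.sum_mem _ fun k _ => Submodule.smul_mem _ _
        (Submodule.smul_mem _ _ (Submodule.subset_span (Set.mem_range_self k)))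
  -- Parseval in w
  have hP : ∀ i, ‖(X - Y) (u i)‖ ^ 2 = ∑ k, ‖⟪y k, u i⟫‖ ^ 2 := by
    intro i
    rw [BS.norm_sq_eq_sum hw (hmem i)]
    exact Finset.sum_congr rfl fun k _ => by rw [hentry]
  -- sum over i for fixed k
  have hk_sum : ∀ k, ∑ i, ‖⟪y k, u i⟫‖ ^ 2 = ∑ j, ‖z k j‖ ^ 2 := by
    intro k
    have h5 : ∑ i, ‖⟪y k, u i⟫‖ ^ 2 = ‖y k‖ ^ 2 := by
      rw [BS.norm_sq_eq_sum hu (hy_mem_u k)]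
      exact Finset.sum_congr rfl fun i _ => by rw [norm_inner_symm]
    have h6 : ‖y k‖ ^ 2 = ∑ j, ‖z k j‖ ^ 2 := by
      rw [BS.norm_sq_eq_sum hv (hy_mem_v k)]
      refine Finset.sum_congr rfl fun j _ => ?_
      have : ⟪v j, y k⟫ = (starRingEnd ℂ) (z k j) := by
        rw [hy]
        rw [inner_sum, Finset.sum_eq_single j]
        · rw [inner_smul_right, hite_v]; simp
        · intro j' _ hj'
          rw [inner_smul_right, hite_v]; simp [Ne.symm hj']
        · simp
      rw [this, RCLike.norm_conj]
    rw [h5, h6]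
  -- z norm
  have hznorm : ∀ k j, ‖z k j‖ ^ 2 = (lam j - mu k) ^ 2 * ‖⟪w k, v j⟫‖ ^ 2 := by
    intro k j
    rw [hz]
    rw [norm_mul, mul_pow, ← Complex.ofReal_sub, Complex.norm_real, Real.norm_eq_abs, sq_abs]
  calc ∑ i, ‖(X - Y) (u i)‖ ^ 2 = ∑ i, ∑ k, ‖⟪y k, u i⟫‖ ^ 2 :=
        Finset.sum_congr rfl fun i _ => hP i
    _ = ∑ k, ∑ i, ‖⟪y k, u i⟫‖ ^ 2 := Finset.sum_comm
    _ = ∑ k, ∑ j, ‖z k j‖ ^ 2 := Finset.sum_congr rfl fun k _ => hk_sum k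
    _ = ∑ k, ∑ j, (lam j - mu k) ^ 2 * ‖⟪w k, v j⟫‖ ^ 2 :=
        Finset.sum_congr rfl fun k _ => Finset.sum_congr rfl fun j _ => hznorm k j

end Core

section Proj

open Filter Topology

variable [CompleteSpace H] {ι : Type*} (b : HilbertBasis ι ℂ H)

/-- The orthogonal projection onto the span of finitely many basis vectors. -/
noncomputable def BS.Q (F : Finset ι) : H →L[ℂ] H :=
  ∑ i ∈ F, (innerSL ℂ (b i)).smulRight (b i)

lemma BS.Q_apply (F : Finset ι) (x : H) : BS.Q b F x = ∑ i ∈ F, ⟪b i, x⟫ • b i := by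
  simp [BS.Q, ContinuousLinearMap.sum_apply, ContinuousLinearMap.smulRight_apply]

lemma BS.Q_basis_in {F : Finset ι} {i : ι} (hi : i ∈ F) : BS.Q b F (b i) = b i := by
  classical
  rw [BS.Q_apply, Finset.sum_eq_single i]
  · rw [orthonormal_iff_ite.mp b.orthonormal]; simp
  · intro j _ hj
    rw [orthonormal_iff_ite.mp b.orthonormal]; simp [hj]
  · exact fun h => absurd hi h

lemma BS.Q_basis_out {F : Finset ι} {i : ι} (hi : i ∉ F) : BS.Q b F (b i) = 0 := by
  classical
  rw [BS.Q_apply]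
  refine Finset.sum_eq_zero fun j hj => ?_
  have hne : j ≠ i := fun h => hi (h ▸ hj)
  rw [orthonormal_iff_ite.mp b.orthonormal]
  simp [hne]

lemma BS.Q_selfAdjoint (F : Finset ι) : IsSelfAdjoint (BS.Q b F) := by
  rw [ContinuousLinearMap.isSelfAdjoint_iff_isSymmetric]
  intro x y
  show ⟪BS.Q b F x, y⟫ = ⟪x, BS.Q b F y⟫
  rw [BS.Q_apply, BS.Q_apply, sum_inner, inner_sum]
  refine Finset.sum_congr rfl fun i _ => ?_
  rw [inner_smul_left, inner_smul_right, inner_conj_symm]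
  ring

lemma BS.Q_norm_apply_le (F : Finset ι) (x : H) : ‖BS.Q b F x‖ ≤ ‖x‖ := by
  classical
  have key : ∀ i ∈ F, ⟪b i, BS.Q b F x⟫ = ⟪b i, x⟫ := by
    intro i hi
    rw [BS.Q_apply, inner_sum, Finset.sum_eq_single i]
    · rw [inner_smul_right, orthonormal_iff_ite.mp b.orthonormal]; simp
    · intro j _ hj
      have hne : i ≠ j := Ne.symm hj
      rw [inner_smul_right, orthonormal_iff_ite.mp b.orthonormal]; simp [hne]
    · exact fun h => absurd hi h
  have hON : Orthonormal ℂ (fun j : {i // i ∈ F} => b ↑j) :=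
    b.orthonormal.comp _ Subtype.val_injective
  have hmem : BS.Q b F x ∈ Submodule.span ℂ (Set.range (fun j : {i // i ∈ F} => b ↑j)) := by
    rw [BS.Q_apply]
    exact Submodule.sum_mem _ fun i hi =>
      Submodule.smul_mem _ _ (Submodule.subset_span ⟨⟨i, hi⟩, rfl⟩)
  have h1 := BS.norm_sq_eq_sum hON hmem
  have h2 : ∑ j : {i // i ∈ F}, ‖⟪b ↑j, BS.Q b F x⟫‖ ^ 2
      = ∑ j : {i // i ∈ F}, ‖⟪b ↑j, x⟫‖ ^ 2 :=
    Finset.sum_congr rfl fun j _ => by rw [key _ j.2]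
  have h3 : ∑ j : {i // i ∈ F}, ‖⟪b ↑j, x⟫‖ ^ 2 = ∑ i ∈ F, ‖⟪b i, x⟫‖ ^ 2 :=
    Finset.sum_coe_sort F (fun i => ‖⟪b i, x⟫‖ ^ 2)
  have h4 : ‖BS.Q b F x‖ ^ 2 ≤ ‖x‖ ^ 2 := by
    rw [h1, h2, h3]
    exact b.orthonormal.sum_inner_products_le x
  exact (pow_le_pow_iff_left₀ (norm_nonneg _) (norm_nonneg _) (by norm_num)).mp h4

lemma BS.Q_tendsto (x : H) : Tendsto (fun F : Finset ι => BS.Q b F x) atTop (𝓝 x) := by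
  have h := b.hasSum_repr x
  have : ∀ F : Finset ι, ∑ i ∈ F, b.repr x i • b i = BS.Q b F x := by
    intro F
    rw [BS.Q_apply]
    exact Finset.sum_congr rfl fun i _ => by rw [b.repr_apply_apply]
  simpa [HasSum, this] using h

end Proj

section Strong

open Filter Topology Polynomial

variable [CompleteSpace H] [Nontrivial H] {ι : Type*} (b : HilbertBasis ι ℂ H)

/-- Compression of an operator by the finite-rank projections. -/
noncomputable def BS.S (A : H →L[ℂ] H) (F : Finset ι) : H →L[ℂ] H :=
  BS.Q b F * A * BS.Q b F

lemma BS.S_apply (A : H →L[ℂ] H) (F : Finset ι) (x : H) :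
    BS.S b A F x = BS.Q b F (A (BS.Q b F x)) := rfl

lemma BS.S_selfAdjoint {A : H →L[ℂ] H} (hA : IsSelfAdjoint A) (F : Finset ι) :
    IsSelfAdjoint (BS.S b A F) := by
  have hQ := BS.Q_selfAdjoint b F
  rw [IsSelfAdjoint, BS.S, star_mul, star_mul, hQ.star_eq, hA.star_eq, mul_assoc]

lemma BS.S_norm_le (A : H →L[ℂ] H) (F : Finset ι) : ‖BS.S b A F‖ ≤ ‖A‖ := by
  refine ContinuousLinearMap.opNorm_le_bound _ (norm_nonneg A) fun x => ?_
  rw [BS.S_apply]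
  calc ‖BS.Q b F (A (BS.Q b F x))‖ ≤ ‖A (BS.Q b F x)‖ := BS.Q_norm_apply_le b F _
    _ ≤ ‖A‖ * ‖BS.Q b F x‖ := A.le_opNorm _
    _ ≤ ‖A‖ * ‖x‖ := by
        have := BS.Q_norm_apply_le b F x
        exact mul_le_mul_of_nonneg_left this (norm_nonneg A)

lemma BS.S_tendsto (A : H →L[ℂ] H) (x : H) :
    Tendsto (fun F : Finset ι => BS.S b A F x) atTop (𝓝 (A x)) := by
  rw [tendsto_iff_norm_sub_tendsto_zero]
  have hbound : ∀ F : Finset ι, ‖BS.S b A F x - A x‖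
      ≤ ‖A‖ * ‖BS.Q b F x - x‖ + ‖BS.Q b F (A x) - A x‖ := by
    intro F
    have : BS.S b A F x - A x
        = BS.Q b F (A (BS.Q b F x - x)) + (BS.Q b F (A x) - A x) := by
      rw [BS.S_apply, map_sub, map_sub]
      abel
    rw [this]
    refine (norm_add_le _ _).trans (add_le_add ?_ le_rfl)
    exact (BS.Q_norm_apply_le b F _).trans (A.le_opNorm _)
  have h1 : Tendsto (fun F : Finset ι => ‖BS.Q b F x - x‖) atTop (𝓝 0) := by
    have := ((BS.Q_tendsto b x).sub (tendsto_const_nhds (x := x))).norm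
    simpa using this
  have h2 : Tendsto (fun F : Finset ι => ‖BS.Q b F (A x) - A x‖) atTop (𝓝 0) := by
    have := ((BS.Q_tendsto b (A x)).sub (tendsto_const_nhds (x := A x))).norm
    simpa using this
  have hlim : Tendsto (fun F : Finset ι => ‖A‖ * ‖BS.Q b F x - x‖ + ‖BS.Q b F (A x) - A x‖)
      atTop (𝓝 0) := by
    have := (h1.const_mul ‖A‖).add h2
    simpa using this
  exact squeeze_zero (fun F => norm_nonneg _) hbound hlim

lemma BS.S_pow_tendsto (A : H →L[ℂ] H) (n : ℕ) (x : H) :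
    Tendsto (fun F : Finset ι => (BS.S b A F ^ n) x) atTop (𝓝 ((A ^ n) x)) := by
  induction n with
  | zero => simpa using tendsto_const_nhds
  | succ n ih =>
    rw [tendsto_iff_norm_sub_tendsto_zero]
    have hbound : ∀ F : Finset ι, ‖(BS.S b A F ^ (n+1)) x - (A ^ (n+1)) x‖
        ≤ ‖A‖ * ‖(BS.S b A F ^ n) x - (A ^ n) x‖ + ‖BS.S b A F ((A ^ n) x) - A ((A ^ n) x)‖ := by
      intro F
      have hrw : (BS.S b A F ^ (n+1)) x - (A ^ (n+1)) x
          = BS.S b A F ((BS.S b A F ^ n) x - (A ^ n) x)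
            + (BS.S b A F ((A ^ n) x) - A ((A ^ n) x)) := by
        rw [pow_succ', pow_succ', ContinuousLinearMap.mul_apply, ContinuousLinearMap.mul_apply,
          map_sub]
        abel
      rw [hrw]
      refine (norm_add_le _ _).trans (add_le_add ?_ le_rfl)
      refine (ContinuousLinearMap.le_opNorm _ _).trans ?_
      exact mul_le_mul_of_nonneg_right (BS.S_norm_le b A F) (norm_nonneg _)
    have h1 : Tendsto (fun F : Finset ι => ‖(BS.S b A F ^ n) x - (A ^ n) x‖) atTop (𝓝 0) := by
      have := (ih.sub (tendsto_const_nhds (x := (A ^ n) x))).norm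
      simpa using this
    have h2 : Tendsto (fun F : Finset ι => ‖BS.S b A F ((A ^ n) x) - A ((A ^ n) x)‖)
        atTop (𝓝 0) := by
      have := ((BS.S_tendsto b A ((A ^ n) x)).sub
        (tendsto_const_nhds (x := A ((A ^ n) x)))).norm
      simpa using this
    have hlim := (h1.const_mul ‖A‖).add h2
    rw [mul_zero, zero_add] at hlim
    exact squeeze_zero (fun F => norm_nonneg _) hbound hlim

lemma BS.S_aeval_tendsto (A : H →L[ℂ] H) (p : Polynomial ℝ) (x : H) :
    Tendsto (fun F : Finset ι => (aeval (BS.S b A F) p) x) atTop (𝓝 ((aeval A p) x)) := by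
  have hmono : ∀ (T : H →L[ℂ] H) (n : ℕ) (r : ℝ),
      (aeval T (monomial n r)) x = r • ((T ^ n) x) := by
    intro T n r
    rw [aeval_monomial, ContinuousLinearMap.mul_apply, Algebra.algebraMap_eq_smul_one,
      ContinuousLinearMap.smul_apply, ContinuousLinearMap.one_apply]
  induction p using Polynomial.induction_on' with
  | add p q hp hq =>
    simp only [map_add, ContinuousLinearMap.add_apply]
    exact hp.add hq
  | monomial n r =>
    simp only [hmono]
    exact (BS.S_pow_tendsto b A n x).const_smul r

set_option maxHeartbeats 1000000 in
lemma BS.S_cfc_tendsto {A : H →L[ℂ] H} (hA : IsSelfAdjoint A) {g : ℝ → ℝ}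
    (hg : Continuous g) (x : H) :
    Tendsto (fun F : Finset ι => cfc g (BS.S b A F) x) atTop (𝓝 (cfc g A x)) := by
  classical
  refine (Metric.tendsto_atTop (β := Finset ι)).mpr ?_
  intro ε hε
  have hε4 : (0:ℝ) < ε / (4 * (‖x‖ + 1)) := by positivity
  obtain ⟨p, hp⟩ := BS.exists_poly g hg ‖A‖ hε4
  have hbound : ∀ T : H →L[ℂ] H, IsSelfAdjoint T → ‖T‖ ≤ ‖A‖ →
      ‖cfc g T x - (aeval T p) x‖ ≤ ε / 4 := by
    intro T hT hTA
    rw [← cfc_polynomial p T hT, ← ContinuousLinearMap.sub_apply,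
      ← cfc_sub g p.eval T hg.continuousOn (Polynomial.continuous_aeval p).continuousOn]
    have hnorm : ‖cfc (fun t => g t - p.eval t) T‖ ≤ ε / (4 * (‖x‖ + 1)) := by
      refine norm_cfc_le hε4.le fun t ht => ?_
      have ht0 := BS.spectrum_subset_Icc T ht
      have ht' : t ∈ Set.Icc (-‖A‖) ‖A‖ :=
        ⟨by linarith [ht0.1, neg_le_neg hTA], le_trans ht0.2 hTA⟩
      simpa [Real.norm_eq_abs] using hp t ht'
    refine (ContinuousLinearMap.le_opNorm _ _).trans ?_
    have hx1 : (0:ℝ) < ‖x‖ + 1 := by positivity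
    calc ‖cfc (fun t => g t - p.eval t) T‖ * ‖x‖ ≤ ε / (4 * (‖x‖ + 1)) * (‖x‖ + 1) :=
          mul_le_mul hnorm (by linarith) (norm_nonneg _) hε4.le
      _ = ε / 4 := by field_simp
  obtain ⟨N, hN⟩ := (Metric.tendsto_atTop (β := Finset ι)).mp
    (BS.S_aeval_tendsto b A p x) (ε / 4) (by positivity)
  refine ⟨N, fun F hF => ?_⟩
  have hSA := BS.S_selfAdjoint b hA F
  have d1 := hbound (BS.S b A F) hSA (BS.S_norm_le b A F)
  have d2 := hN F hF
  have d3 := hbound A hA le_rfl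
  calc dist (cfc g (BS.S b A F) x) (cfc g A x)
      ≤ dist (cfc g (BS.S b A F) x) ((aeval (BS.S b A F) p) x)
        + dist ((aeval (BS.S b A F) p) x) ((aeval A p) x)
        + dist ((aeval A p) x) (cfc g A x) := dist_triangle4 _ _ _ _
    _ < ε := by
        simp only [dist_eq_norm] at d2 ⊢
        have d3' : ‖((aeval A) p) x - cfc g A x‖ ≤ ε / 4 := by
          rw [norm_sub_rev]; exact d3
        linarith

end Strong

section PerF

open Filter Topology

variable [CompleteSpace H] [Nontrivial H] {ι : Type*} (b : HilbertBasis ι ℂ H)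

set_option maxHeartbeats 1000000 in
lemma BS.perF_bound (A B : H →L[ℂ] H) (hA : IsSelfAdjoint A) (hB : IsSelfAdjoint B)
    (g : ℝ → ℝ) (K : NNReal) (hg : LipschitzWith K g) (F : Finset ι) :
    ∑ i ∈ F, ‖(cfc g (BS.S b A F) - cfc g (BS.S b B F)) (b i)‖ ^ 2
      ≤ (K : ℝ) ^ 2 * ∑ i ∈ F, ‖(A - B) (b i)‖ ^ 2 := by
  classical
  set u : {i // i ∈ F} → H := fun j => b ↑j with hu_def
  have hu : Orthonormal ℂ u := b.orthonormal.comp _ Subtype.val_injective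
  set V : Submodule ℂ H := Submodule.span ℂ (Set.range u) with hV_def
  have hQ_mem : ∀ x : H, BS.Q b F x ∈ V := by
    intro x
    rw [BS.Q_apply]
    exact Submodule.sum_mem _ fun i hi =>
      Submodule.smul_mem _ _ (Submodule.subset_span ⟨⟨i, hi⟩, rfl⟩)
  have hfd : FiniteDimensional ℂ V := FiniteDimensional.span_of_finite ℂ (Set.finite_range u)
  -- restrictions
  have hSA_mem : ∀ x ∈ V, BS.S b A F x ∈ V := fun x _ => hQ_mem _
  have hSB_mem : ∀ x ∈ V, BS.S b B F x ∈ V := fun x _ => hQ_mem _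
  set SA' : V →ₗ[ℂ] V := LinearMap.restrict (BS.S b A F : H →ₗ[ℂ] H) hSA_mem with hSA'_def
  set SB' : V →ₗ[ℂ] V := LinearMap.restrict (BS.S b B F : H →ₗ[ℂ] H) hSB_mem with hSB'_def
  have hsymA : SA'.IsSymmetric := by
    intro x y
    have h := (ContinuousLinearMap.isSelfAdjoint_iff_isSymmetric.mp
      (BS.S_selfAdjoint b hA F)) (x : H) (y : H)
    simpa [hSA'_def, Submodule.coe_inner, LinearMap.restrict_coe_apply] using h
  have hsymB : SB'.IsSymmetric := by
    intro x y
    have h := (ContinuousLinearMap.isSelfAdjoint_iff_isSymmetric.mp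
      (BS.S_selfAdjoint b hB F)) (x : H) (y : H)
    simpa [hSB'_def, Submodule.coe_inner, LinearMap.restrict_coe_apply] using h
  -- eigenbases
  set n : ℕ := Module.finrank ℂ V with hn_def
  set vB := hsymA.eigenvectorBasis rfl with hvB_def
  set lam := hsymA.eigenvalues (n := n) rfl with hlam_def
  set wB := hsymB.eigenvectorBasis rfl with hwB_def
  set mu := hsymB.eigenvalues (n := n) rfl with hmu_def
  set v : Fin n → H := fun j => (vB j : H) with hv_def
  set w : Fin n → H := fun k => (wB k : H) with hw_def
  have hv : Orthonormal ℂ v := by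
    rw [orthonormal_iff_ite]
    intro i j
    have := orthonormal_iff_ite.mp vB.orthonormal i j
    rwa [Submodule.coe_inner] at this
  have hw : Orthonormal ℂ w := by
    rw [orthonormal_iff_ite]
    intro i j
    have := orthonormal_iff_ite.mp wB.orthonormal i j
    rwa [Submodule.coe_inner] at this
  -- spans
  have hspan : ∀ (eB : OrthonormalBasis (Fin n) ℂ V),
      Submodule.span ℂ (Set.range (fun j => ((eB j : H)))) = V := by
    intro eB
    have h1 : Set.range (fun j => ((eB j : H))) = V.subtype '' Set.range eB := by
      rw [← Set.range_comp]; rfl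
    rw [h1, Submodule.span_image]
    have h2 : Submodule.span ℂ (Set.range eB) = ⊤ := by
      have := eB.toBasis.span_eq
      rwa [eB.coe_toBasis] at this
    rw [h2, Submodule.map_top, Submodule.range_subtype]
  have hspanv : Submodule.span ℂ (Set.range v) = V := hspan vB
  have hspanw : Submodule.span ℂ (Set.range w) = V := hspan wB
  have huv : ∀ i, u i ∈ Submodule.span ℂ (Set.range v) := fun i => by
    rw [hspanv]; exact Submodule.subset_span (Set.mem_range_self i)
  have huw : ∀ i, u i ∈ Submodule.span ℂ (Set.range w) := fun i => by
    rw [hspanw]; exact Submodule.subset_span (Set.mem_range_self i)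
  have hvw : ∀ j, v j ∈ Submodule.span ℂ (Set.range w) := fun j => by
    rw [hspanw]; exact (vB j).2
  have hvu : ∀ j, v j ∈ Submodule.span ℂ (Set.range u) := fun j => (vB j).2
  have hXv : ∀ j, BS.S b A F (v j) = ((lam j : ℝ) : ℂ) • v j := by
    intro j
    have h := hsymA.apply_eigenvectorBasis (n := n) rfl j
    calc BS.S b A F (v j) = ((SA' (vB j) : V) : H) :=
          (LinearMap.restrict_coe_apply _ hSA_mem _).symm
      _ = (((lam j : ℂ) • vB j : V) : H) := by rw [h]; rfl
      _ = (lam j : ℂ) • v j := rfl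
  have hYw : ∀ k, BS.S b B F (w k) = ((mu k : ℝ) : ℂ) • w k := by
    intro k
    have h := hsymB.apply_eigenvectorBasis (n := n) rfl k
    calc BS.S b B F (w k) = ((SB' (wB k) : V) : H) :=
          (LinearMap.restrict_coe_apply _ hSB_mem _).symm
      _ = (((mu k : ℂ) • wB k : V) : H) := by rw [h]; rfl
      _ = (mu k : ℂ) • w k := rfl
  have hvne : ∀ j, v j ≠ 0 := by
    intro j hj
    have h1 : ‖vB j‖ = 1 := vB.orthonormal.1 j
    rw [← Submodule.norm_coe] at h1
    rw [show ((vB j : H)) = v j from rfl, hj] at h1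
    simp at h1
  have hwne : ∀ k, w k ≠ 0 := by
    intro k hk
    have h1 : ‖wB k‖ = 1 := wB.orthonormal.1 k
    rw [← Submodule.norm_coe] at h1
    rw [show ((wB k : H)) = w k from rfl, hk] at h1
    simp at h1
  have hspecA : ∀ j, lam j ∈ spectrum ℝ (BS.S b A F) :=
    fun j => BS.mem_spectrum_of_eigen (hvne j) (hXv j)
  have hspecB : ∀ k, mu k ∈ spectrum ℝ (BS.S b B F) :=
    fun k => BS.mem_spectrum_of_eigen (hwne k) (hYw k)
  have hcfcA : ∀ j, cfc g (BS.S b A F) (v j) = ((g (lam j) : ℝ) : ℂ) • v j :=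
    fun j => BS.cfc_apply_eigen (BS.S_selfAdjoint b hA F) hg.continuous (hXv j) (hspecA j)
  have hcfcB : ∀ k, cfc g (BS.S b B F) (w k) = ((g (mu k) : ℝ) : ℂ) • w k :=
    fun k => BS.cfc_apply_eigen (BS.S_selfAdjoint b hB F) hg.continuous (hYw k) (hspecB k)
  have e1 := BS.core_identity hu hv hw huv huw hvw hvu
    (cfc g (BS.S b A F)) (cfc g (BS.S b B F)) (fun j => g (lam j)) (fun k => g (mu k)) hcfcA hcfcB
  have e2 := BS.core_identity hu hv hw huv huw hvw hvu
    (BS.S b A F) (BS.S b B F) lam mu hXv hYw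
  have hptwise : ∀ (k j : Fin n), (g (lam j) - g (mu k)) ^ 2 * ‖⟪w k, v j⟫‖ ^ 2
      ≤ (K : ℝ) ^ 2 * ((lam j - mu k) ^ 2 * ‖⟪w k, v j⟫‖ ^ 2) := by
    intro k j
    have h := hg.dist_le_mul (lam j) (mu k)
    rw [Real.dist_eq, Real.dist_eq] at h
    have h2 : (g (lam j) - g (mu k)) ^ 2 ≤ (K : ℝ) ^ 2 * (lam j - mu k) ^ 2 := by
      rw [← sq_abs (g (lam j) - g (mu k)), ← sq_abs (lam j - mu k)]
      calc |g (lam j) - g (mu k)| ^ 2 ≤ ((K : ℝ) * |lam j - mu k|) ^ 2 :=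
            pow_le_pow_left₀ (abs_nonneg _) h 2
        _ = (K : ℝ) ^ 2 * |lam j - mu k| ^ 2 := by ring
    calc (g (lam j) - g (mu k)) ^ 2 * ‖⟪w k, v j⟫‖ ^ 2
        ≤ ((K : ℝ) ^ 2 * (lam j - mu k) ^ 2) * ‖⟪w k, v j⟫‖ ^ 2 :=
          mul_le_mul_of_nonneg_right h2 (by positivity)
      _ = (K : ℝ) ^ 2 * ((lam j - mu k) ^ 2 * ‖⟪w k, v j⟫‖ ^ 2) := by ring
  have main : ∑ i : {i // i ∈ F}, ‖(cfc g (BS.S b A F) - cfc g (BS.S b B F)) (u i)‖ ^ 2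
      ≤ (K : ℝ) ^ 2 * ∑ i : {i // i ∈ F}, ‖(BS.S b A F - BS.S b B F) (u i)‖ ^ 2 := by
    rw [e1, e2, Finset.mul_sum]
    refine Finset.sum_le_sum fun k _ => ?_
    rw [Finset.mul_sum]
    exact Finset.sum_le_sum fun j _ => hptwise k j
  have hcomp : ∀ i ∈ F, ‖(BS.S b A F - BS.S b B F) (b i)‖ ≤ ‖(A - B) (b i)‖ := by
    intro i hi
    have hSdiff : (BS.S b A F - BS.S b B F) (b i) = BS.Q b F ((A - B) (b i)) := by
      rw [ContinuousLinearMap.sub_apply, BS.S_apply, BS.S_apply, BS.Q_basis_in b hi,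
        ContinuousLinearMap.sub_apply, map_sub]
    rw [hSdiff]
    exact BS.Q_norm_apply_le b F _
  have hconv1 : ∑ i : {i // i ∈ F}, ‖(cfc g (BS.S b A F) - cfc g (BS.S b B F)) (u i)‖ ^ 2
      = ∑ i ∈ F, ‖(cfc g (BS.S b A F) - cfc g (BS.S b B F)) (b i)‖ ^ 2 := by
    rw [← Finset.sum_coe_sort F
      (fun i => ‖(cfc g (BS.S b A F) - cfc g (BS.S b B F)) (b i)‖ ^ 2)]
  have hconv2 : ∑ i : {i // i ∈ F}, ‖(BS.S b A F - BS.S b B F) (u i)‖ ^ 2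
      = ∑ i ∈ F, ‖(BS.S b A F - BS.S b B F) (b i)‖ ^ 2 := by
    rw [← Finset.sum_coe_sort F (fun i => ‖(BS.S b A F - BS.S b B F) (b i)‖ ^ 2)]
  rw [hconv1, hconv2] at main
  refine main.trans ?_
  refine mul_le_mul_of_nonneg_left ?_ (by positivity)
  refine Finset.sum_le_sum fun i hi => ?_
  exact pow_le_pow_left₀ (norm_nonneg _) (hcomp i hi) 2

end PerF


/-- A bounded linear operator between complex Hilbert spaces is **Hilbert–Schmidt** if for some
(equivalently, every) Hilbert orthonormal basis `(e i)` of its domain, the family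
`i ↦ ‖T (e i)‖ ^ 2` is summable. -/
def IsHilbertSchmidt {E : Type u} {F : Type v} [NormedAddCommGroup E] [InnerProductSpace ℂ E]
    [NormedAddCommGroup F] [InnerProductSpace ℂ F] (T : E →L[ℂ] F) : Prop :=
  ∃ (ι : Type u) (b : HilbertBasis ι ℂ E), Summable fun i => ‖T (b i)‖ ^ 2

open Filter Topology in
set_option maxHeartbeats 1000000 in
/-- **Birman–Solomyak theorem, Hilbert–Schmidt case.** If `A` and `B` are bounded self-adjoint
operators on a complex Hilbert space, `f : ℝ → ℝ` is Lipschitz on a set containing the spectra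
of both `A` and `B`, and `A - B` is Hilbert–Schmidt, then `f(A) - f(B)` is Hilbert–Schmidt. -/
theorem birmanSolomyak_hilbertSchmidt {H : Type u} [NormedAddCommGroup H]
    [InnerProductSpace ℂ H] [CompleteSpace H]
    (A B : H →L[ℂ] H) (hA : IsSelfAdjoint A) (hB : IsSelfAdjoint B)
    (s : Set ℝ) (hAs : spectrum ℝ A ⊆ s) (hBs : spectrum ℝ B ⊆ s)
    (f : ℝ → ℝ) (K : NNReal) (hf : LipschitzOnWith K f s)
    (hHS : IsHilbertSchmidt (A - B)) :
    IsHilbertSchmidt (cfc f A - cfc f B) := by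
  classical
  obtain ⟨ι, b, hsum⟩ := hHS
  obtain ⟨g, hg, hgs⟩ := hf.extend_real
  have hfA : cfc f A = cfc g A := cfc_congr fun x hx => hgs (hAs hx)
  have hfB : cfc f B = cfc g B := cfc_congr fun x hx => hgs (hBs hx)
  rw [hfA, hfB]
  refine ⟨ι, b, ?_⟩
  rcases subsingleton_or_nontrivial H with hsub | hnt
  · have hz : ∀ i : ι, ‖(cfc g A - cfc g B) (b i)‖ ^ 2 = 0 := fun i => by
      rw [Subsingleton.elim ((cfc g A - cfc g B) (b i)) 0]; simp
    exact summable_zero.congr fun i => (hz i).symm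
  · set C := ∑' i, ‖(A - B) (b i)‖ ^ 2 with hC_def
    have hCb : ∀ G : Finset ι, ∑ i ∈ G, ‖(A - B) (b i)‖ ^ 2 ≤ C :=
      fun G => Summable.sum_le_tsum G (fun i _ => by positivity) hsum
    have hbound : ∀ G : Finset ι,
        ∑ i ∈ G, ‖(cfc g A - cfc g B) (b i)‖ ^ 2 ≤ (K : ℝ) ^ 2 * C := by
      intro G
      have hten : Tendsto (fun F : Finset ι =>
          ∑ i ∈ G, ‖(cfc g (BS.S b A F) - cfc g (BS.S b B F)) (b i)‖ ^ 2) atTop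
          (𝓝 (∑ i ∈ G, ‖(cfc g A - cfc g B) (b i)‖ ^ 2)) := by
        refine tendsto_finset_sum _ fun i _ => ?_
        have h1 : Tendsto (fun F : Finset ι =>
            (cfc g (BS.S b A F) - cfc g (BS.S b B F)) (b i)) atTop
            (𝓝 ((cfc g A - cfc g B) (b i))) := by
          simp only [ContinuousLinearMap.sub_apply]
          exact (BS.S_cfc_tendsto b hA hg.continuous (b i)).sub
            (BS.S_cfc_tendsto b hB hg.continuous (b i))
        exact h1.norm.pow 2
      refine le_of_tendsto hten (Eventually.of_forall fun F => ?_)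
      have hzero : ∀ i, i ∉ F → (cfc g (BS.S b A F) - cfc g (BS.S b B F)) (b i) = 0 := by
        intro i hi
        have hbne : b i ≠ 0 := by
          intro h
          have := b.orthonormal.1 i
          rw [h] at this; simp at this
        have hAi : BS.S b A F (b i) = ((0 : ℝ) : ℂ) • b i := by
          rw [BS.S_apply, BS.Q_basis_out b hi]
          simp
        have hBi : BS.S b B F (b i) = ((0 : ℝ) : ℂ) • b i := by
          rw [BS.S_apply, BS.Q_basis_out b hi]
          simp
        rw [ContinuousLinearMap.sub_apply,
          BS.cfc_apply_eigen (BS.S_selfAdjoint b hA F) hg.continuous hAi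
            (BS.mem_spectrum_of_eigen hbne hAi),
          BS.cfc_apply_eigen (BS.S_selfAdjoint b hB F) hg.continuous hBi
            (BS.mem_spectrum_of_eigen hbne hBi), sub_self]
      calc ∑ i ∈ G, ‖(cfc g (BS.S b A F) - cfc g (BS.S b B F)) (b i)‖ ^ 2
          = ∑ i ∈ G ∩ F, ‖(cfc g (BS.S b A F) - cfc g (BS.S b B F)) (b i)‖ ^ 2 := by
            refine (Finset.sum_subset Finset.inter_subset_left ?_).symm
            intro i _ hi
            have : i ∉ F := fun h => hi (Finset.mem_inter.mpr ⟨‹i ∈ G›, h⟩)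
            rw [hzero i this]; simp
        _ ≤ ∑ i ∈ F, ‖(cfc g (BS.S b A F) - cfc g (BS.S b B F)) (b i)‖ ^ 2 :=
            Finset.sum_le_sum_of_subset_of_nonneg Finset.inter_subset_right
              (fun i _ _ => by positivity)
        _ ≤ (K : ℝ) ^ 2 * ∑ i ∈ F, ‖(A - B) (b i)‖ ^ 2 :=
            BS.perF_bound b A B hA hB g K hg F
        _ ≤ (K : ℝ) ^ 2 * C := mul_le_mul_of_nonneg_left (hCb F) (by positivity)
    exact summable_of_sum_le (fun i => by positivity) hbound
end
end

section
/- Let K₁ and K₂ be complex Hilbert spaces. Let R₁ be a bounded operator on K₁ with R₁† = −R₁ and R₁ ∘ R₁ = −1, and R₂ a bounded operator on K₂ with R₂† = −R₂ and R₂ ∘ R₂ = −1. Let L : K₁ → K₂ be a bounded bijective linear map with L† ∘ R₂ ∘ L = R₁, and set Q := L† ∘ L. Suppose there are conjugations Γ₁ on K₁ and Γ₂ on K₂ satisfying Γ₁ ∘ R₁ = R₁ ∘ Γ₁, Γ₂ ∘ R₂ = R₂ ∘ Γ₂, and L ∘ Γ₁ = Γ₂ ∘ L. Let Π₁ := (1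 − i·R₁)/2 (the orthogonal projection onto the +i eigenspace of R₁) and Π₂ := (1 + i·R₂)/2 (the orthogonal projection onto the −i eigenspace of R₂). Then the operator Π₁ ∘ L⁻¹ ∘ Π₂ : K₂ → K₁ is Hilbert–Schmidt if and only if Q − 1 is Hilbert–Schmidt. -/
noncomputable section

universe u v w

open ContinuousLinearMap Submodule

section AuxHS

set_option linter.unusedSectionVars false
set_option maxHeartbeats 1000000

variable {E : Type u} {F : Type v} {G : Type w}
  [NormedAddCommGroup E] [InnerProductSpace ℂ E] [CompleteSpace E]
  [NormedAddCommGroup F] [InnerProductSpace ℂ F] [CompleteSpace F]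
  [NormedAddCommGroup G] [InnerProductSpace ℂ G] [CompleteSpace G]

lemma hs_parseval {ι : Type*} (c : HilbertBasis ι ℂ F) (x : F) :
    HasSum (fun j => ‖(inner ℂ (c j) x : ℂ)‖ ^ 2) (‖x‖ ^ 2) := by
  have h := c.hasSum_inner_mul_inner x x
  have h2 : ∀ j : ι, (inner ℂ x (c j) : ℂ) * inner ℂ (c j) x
      = ((‖(inner ℂ (c j) x : ℂ)‖ ^ 2 : ℝ) : ℂ) := by
    intro j
    rw [← inner_conj_symm x (c j), mul_comm, Complex.mul_conj]
    rw [Complex.normSq_eq_norm_sq]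
  have h3 : (inner ℂ x x : ℂ) = ((‖x‖ ^ 2 : ℝ) : ℂ) := by
    rw [inner_self_eq_norm_sq_to_K]; norm_cast
  rw [funext h2, h3] at h
  exact Complex.hasSum_ofReal.mp h

lemma hs_key {ι κ : Type*} (T : E →L[ℂ] F) (b : HilbertBasis ι ℂ E) (c : HilbertBasis κ ℂ F)
    (i : ι) (j : κ) :
    ‖(inner ℂ (c j) (T (b i)) : ℂ)‖ ^ 2
      = ‖(inner ℂ (b i) ((ContinuousLinearMap.adjoint T) (c j)) : ℂ)‖ ^ 2 := by
  rw [← ContinuousLinearMap.adjoint_inner_left T (b i) (c j), norm_inner_symm]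

lemma hs_summable_adjoint_iff {ι κ : Type*} (T : E →L[ℂ] F)
    (b : HilbertBasis ι ℂ E) (c : HilbertBasis κ ℂ F) :
    (Summable fun i => ‖T (b i)‖ ^ 2) ↔
      Summable fun j => ‖(ContinuousLinearMap.adjoint T) (c j)‖ ^ 2 := by
  have e1 : (fun i : ι => ∑' j : κ, ‖(inner ℂ (c j) (T (b i)) : ℂ)‖ ^ 2)
      = fun i => ‖T (b i)‖ ^ 2 :=
    funext fun i => (hs_parseval c (T (b i))).tsum_eq
  have e2 : (fun j : κ => ∑' i : ι, ‖(inner ℂ (c j) (T (b i)) : ℂ)‖ ^ 2)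
      = fun j => ‖(ContinuousLinearMap.adjoint T) (c j)‖ ^ 2 := by
    refine funext fun j => ?_
    rw [tsum_congr (fun i => hs_key T b c i j)]
    exact (hs_parseval b ((ContinuousLinearMap.adjoint T) (c j))).tsum_eq
  constructor
  · intro h
    have hsf : Summable (fun p : ι × κ => ‖(inner ℂ (c p.2) (T (b p.1)) : ℂ)‖ ^ 2) := by
      rw [summable_prod_of_nonneg (fun p => by positivity)]
      exact ⟨fun i => (hs_parseval c (T (b i))).summable, by rw [e1]; exact h⟩
    have hsw := hsf.prod_symm
    rw [summable_prod_of_nonneg (fun p => by positivity)] at hsw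
    have := hsw.2
    simp only [Prod.swap_prod_mk] at this
    rwa [e2] at this
  · intro h
    have hsw : Summable (fun p : κ × ι => ‖(inner ℂ (c p.1) (T (b p.2)) : ℂ)‖ ^ 2) := by
      rw [summable_prod_of_nonneg (fun p => by positivity)]
      refine ⟨fun j => ?_, by rw [e2]; exact h⟩
      have := (hs_parseval b ((ContinuousLinearMap.adjoint T) (c j))).summable
      refine this.congr fun i => (hs_key T b c i j).symm
    have hsf := hsw.prod_symm
    rw [summable_prod_of_nonneg (fun p => by positivity)] at hsf
    have := hsf.2
    simp only [Prod.swap_prod_mk] at this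
    rwa [e1] at this

lemma IsHilbertSchmidt.adjoint {T : E →L[ℂ] F} (h : IsHilbertSchmidt T) :
    IsHilbertSchmidt (ContinuousLinearMap.adjoint T) := by
  obtain ⟨ι, b, hb⟩ := h
  obtain ⟨w, c, -⟩ := exists_hilbertBasis ℂ F
  exact ⟨w, c, (hs_summable_adjoint_iff T b c).mp hb⟩

lemma IsHilbertSchmidt.summable {T : E →L[ℂ] F} (h : IsHilbertSchmidt T)
    {ι : Type*} (b : HilbertBasis ι ℂ E) : Summable fun i => ‖T (b i)‖ ^ 2 := by
  obtain ⟨ι₀, b₀, hb₀⟩ := h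
  obtain ⟨w, c, -⟩ := exists_hilbertBasis ℂ F
  exact (hs_summable_adjoint_iff T b c).mpr ((hs_summable_adjoint_iff T b₀ c).mp hb₀)

lemma IsHilbertSchmidt.left_comp {T : E →L[ℂ] F} (h : IsHilbertSchmidt T) (C : F →L[ℂ] G) :
    IsHilbertSchmidt (C ∘L T) := by
  obtain ⟨ι, b, hb⟩ := h
  refine ⟨ι, b, Summable.of_nonneg_of_le (fun i => by positivity) (fun i => ?_)
    (hb.mul_left (‖C‖ ^ 2))⟩
  simp only [ContinuousLinearMap.comp_apply]
  calc ‖C (T (b i))‖ ^ 2 ≤ (‖C‖ * ‖T (b i)‖) ^ 2 := by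
        apply pow_le_pow_left₀ (norm_nonneg _) (C.le_opNorm _)
    _ = ‖C‖ ^ 2 * ‖T (b i)‖ ^ 2 := by ring

lemma IsHilbertSchmidt.right_comp {T : E →L[ℂ] F} (h : IsHilbertSchmidt T) (C : G →L[ℂ] E) :
    IsHilbertSchmidt (T ∘L C) := by
  have h1 : IsHilbertSchmidt (ContinuousLinearMap.adjoint C ∘L ContinuousLinearMap.adjoint T) :=
    h.adjoint.left_comp _
  have h2 := h1.adjoint
  rwa [ContinuousLinearMap.adjoint_comp, ContinuousLinearMap.adjoint_adjoint,
    ContinuousLinearMap.adjoint_adjoint] at h2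

lemma IsHilbertSchmidt.smul {T : E →L[ℂ] F} (h : IsHilbertSchmidt T) (a : ℂ) :
    IsHilbertSchmidt (a • T) := by
  obtain ⟨ι, b, hb⟩ := h
  refine ⟨ι, b, ?_⟩
  simp only [ContinuousLinearMap.smul_apply, norm_smul, mul_pow]
  exact hb.mul_left _

lemma IsHilbertSchmidt.neg {T : E →L[ℂ] F} (h : IsHilbertSchmidt T) :
    IsHilbertSchmidt (-T) := by
  obtain ⟨ι, b, hb⟩ := h
  exact ⟨ι, b, by simpa using hb⟩

lemma IsHilbertSchmidt.add {T S : E →L[ℂ] F} (hT : IsHilbertSchmidt T) (hS : IsHilbertSchmidt S) :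
    IsHilbertSchmidt (T + S) := by
  obtain ⟨ι, b, hb⟩ := hT
  have hS' := hS.summable b
  refine ⟨ι, b, Summable.of_nonneg_of_le (fun i => by positivity) (fun i => ?_)
    ((hb.add hS').mul_left 2)⟩
  simp only [ContinuousLinearMap.add_apply]
  calc ‖T (b i) + S (b i)‖ ^ 2 ≤ (‖T (b i)‖ + ‖S (b i)‖) ^ 2 := by
        apply pow_le_pow_left₀ (norm_nonneg _) (norm_add_le _ _)
    _ ≤ 2 * (‖T (b i)‖ ^ 2 + ‖S (b i)‖ ^ 2) := by nlinarith [sq_nonneg (‖T (b i)‖ - ‖S (b i)‖)]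

lemma conj_transport (Γ : E → E)
    (hadd : ∀ x y, Γ (x + y) = Γ x + Γ y)
    (hsmul : ∀ (c : ℂ) (x : E), Γ (c • x) = star c • Γ x)
    (hinvol : ∀ x, Γ (Γ x) = x)
    (hinner : ∀ x y, (inner ℂ (Γ x) (Γ y) : ℂ) = inner ℂ y x)
    {T S : E →L[ℂ] E} (hTS : ∀ v, S v = Γ (T (Γ v)))
    (h : IsHilbertSchmidt T) : IsHilbertSchmidt S := by
  have hnorm : ∀ x, ‖Γ x‖ = ‖x‖ := by
    intro x
    have h2 : ‖Γ x‖ ^ 2 = ‖x‖ ^ 2 := by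
      rw [← inner_self_eq_norm_sq (𝕜 := ℂ), ← inner_self_eq_norm_sq (𝕜 := ℂ), hinner]
    nlinarith [norm_nonneg (Γ x), norm_nonneg x]
  have hsub : ∀ x y, Γ (x - y) = Γ x - Γ y := by
    intro x y
    have : x - y = x + (-1 : ℂ) • y := by module
    rw [this, hadd, hsmul]
    rw [sub_eq_add_neg]
    congr 1
    simp
  have hcont : Continuous Γ := by
    have : Isometry Γ := by
      refine Isometry.of_dist_eq fun a b => ?_
      rw [dist_eq_norm, dist_eq_norm, ← hsub, hnorm]
    exact this.continuous
  obtain ⟨ι, b, hb⟩ := h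
  -- the conjugated family is orthonormal
  have hon : Orthonormal ℂ (fun i => Γ (b i)) := by
    classical
    rw [orthonormal_iff_ite]
    intro i j
    rw [hinner]
    have := orthonormal_iff_ite.mp b.orthonormal j i
    rw [this]
    by_cases hij : i = j <;> simp [hij, eq_comm]
  -- density of the span
  have hsp : ⊤ ≤ (span ℂ (Set.range fun i => Γ (b i))).topologicalClosure := by
    intro x _
    have himg : Γ '' ((span ℂ (Set.range b) : Submodule ℂ E) : Set E)
        ⊆ ((span ℂ (Set.range fun i => Γ (b i)) : Submodule ℂ E) : Set E) := by
      rintro _ ⟨y, hy, rfl⟩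
      induction hy using span_induction with
      | mem z hz =>
        obtain ⟨i, rfl⟩ := hz
        exact subset_span ⟨i, rfl⟩
      | zero =>
        have : Γ (0 : E) = 0 := by
          have := hsmul 0 0; simpa using this
        rw [this]; exact (span ℂ _).zero_mem
      | add a c _ _ ha hc => rw [hadd]; exact (span ℂ _).add_mem ha hc
      | smul c a _ ha => rw [hsmul]; exact (span ℂ _).smul_mem _ ha
    have hΓx : Γ x ∈ closure ((span ℂ (Set.range b) : Submodule ℂ E) : Set E) := by
      have hd := b.dense_span
      have : Γ x ∈ (span ℂ (Set.range b) : Submodule ℂ E).topologicalClosure := by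
        rw [hd]; trivial
      exact this
    have : x ∈ closure (Γ '' ((span ℂ (Set.range b) : Submodule ℂ E) : Set E)) := by
      have hx' : x = Γ (Γ x) := (hinvol x).symm
      rw [hx']
      exact (image_closure_subset_closure_image hcont) ⟨Γ x, hΓx, rfl⟩
    exact closure_mono himg this
  refine ⟨ι, HilbertBasis.mk hon hsp, ?_⟩
  rw [HilbertBasis.coe_mk]
  refine hb.congr fun i => ?_
  rw [hTS, hinvol, hnorm]


end AuxHS

set_option maxHeartbeats 1000000 in
/-- For pure Gaussian one-particle data with compatible conjugations, the two-particle
normalizability condition `prj₁ L⁻¹ prj₂` Hilbert–Schmidt holds if and only if the Araki–Yamagami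
condition `Q - 1` Hilbert–Schmidt holds. -/
theorem twoParticle_hilbertSchmidt_iff_arakiYamagami
    {K₁ : Type u} {K₂ : Type v}
    [NormedAddCommGroup K₁] [InnerProductSpace ℂ K₁] [CompleteSpace K₁]
    [NormedAddCommGroup K₂] [InnerProductSpace ℂ K₂] [CompleteSpace K₂]
    (R₁ : K₁ →L[ℂ] K₁) (hR₁adj : ContinuousLinearMap.adjoint R₁ = -R₁) (hR₁sq : R₁ * R₁ = -1)
    (R₂ : K₂ →L[ℂ] K₂) (hR₂adj : ContinuousLinearMap.adjoint R₂ = -R₂) (hR₂sq : R₂ * R₂ = -1)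
    (L : K₁ ≃L[ℂ] K₂)
    (hL : ContinuousLinearMap.adjoint (L : K₁ →L[ℂ] K₂) ∘L R₂ ∘L (L : K₁ →L[ℂ] K₂) = R₁)
    (Q : K₁ →L[ℂ] K₁)
    (hQ : Q = ContinuousLinearMap.adjoint (L : K₁ →L[ℂ] K₂) ∘L (L : K₁ →L[ℂ] K₂))
    -- conjugations
    (Γ₁ : K₁ → K₁) (Γ₂ : K₂ → K₂)
    (hΓ₁add : ∀ x y, Γ₁ (x + y) = Γ₁ x + Γ₁ y)
    (hΓ₁smul : ∀ (c : ℂ) (x : K₁), Γ₁ (c • x) = star c • Γ₁ x)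
    (hΓ₁invol : ∀ x, Γ₁ (Γ₁ x) = x)
    (hΓ₁inner : ∀ x y, (inner ℂ (Γ₁ x) (Γ₁ y) : ℂ) = inner ℂ y x)
    (hΓ₂add : ∀ x y, Γ₂ (x + y) = Γ₂ x + Γ₂ y)
    (hΓ₂smul : ∀ (c : ℂ) (x : K₂), Γ₂ (c • x) = star c • Γ₂ x)
    (hΓ₂invol : ∀ x, Γ₂ (Γ₂ x) = x)
    (hΓ₂inner : ∀ x y, (inner ℂ (Γ₂ x) (Γ₂ y) : ℂ) = inner ℂ y x)
    (hΓ₁R : ∀ x, Γ₁ (R₁ x) = R₁ (Γ₁ x))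
    (hΓ₂R : ∀ x, Γ₂ (R₂ x) = R₂ (Γ₂ x))
    (hLΓ : ∀ x, (L : K₁ →L[ℂ] K₂) (Γ₁ x) = Γ₂ ((L : K₁ →L[ℂ] K₂) x))
    -- spectral projections
    (prj₁ : K₁ →L[ℂ] K₁) (prj₂ : K₂ →L[ℂ] K₂)
    (hprj₁ : prj₁ = (2 : ℂ)⁻¹ • (1 - Complex.I • R₁))
    (hprj₂ : prj₂ = (2 : ℂ)⁻¹ • (1 + Complex.I • R₂)) :
    IsHilbertSchmidt (prj₁ ∘L (L.symm : K₂ →L[ℂ] K₁) ∘L prj₂) ↔ IsHilbertSchmidt (Q - 1) := by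
  classical
  set A : K₁ →L[ℂ] K₂ := (L : K₁ →L[ℂ] K₂) with hAdef
  set B : K₂ →L[ℂ] K₁ := (L.symm : K₂ →L[ℂ] K₁) with hBdef
  have hAB : ∀ x : K₂, A (B x) = x := fun x => L.apply_symm_apply x
  have hBA : ∀ x : K₁, B (A x) = x := fun x => L.symm_apply_apply x
  have hBdagAdag : ∀ z : K₂, ContinuousLinearMap.adjoint B (ContinuousLinearMap.adjoint A z) = z := by
    intro z
    apply ext_inner_right ℂ
    intro v
    rw [ContinuousLinearMap.adjoint_inner_left, ContinuousLinearMap.adjoint_inner_left, hAB]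
  have hAdagBdag : ∀ z : K₁, ContinuousLinearMap.adjoint A (ContinuousLinearMap.adjoint B z) = z := by
    intro z
    apply ext_inner_right ℂ
    intro v
    rw [ContinuousLinearMap.adjoint_inner_left, ContinuousLinearMap.adjoint_inner_left, hBA]
  set Qi : K₁ →L[ℂ] K₁ := B ∘L ContinuousLinearMap.adjoint B with hQidef
  have hQQi : ∀ x, Q (Qi x) = x := by
    intro x
    rw [hQ]
    simp only [hQidef, ContinuousLinearMap.comp_apply]
    rw [hAB, hAdagBdag]
  have hQiQ : ∀ x, Qi (Q x) = x := by
    intro x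
    rw [hQ]
    simp only [hQidef, ContinuousLinearMap.comp_apply]
    rw [hBdagAdag, hBA]
  have hR1 : ∀ x, R₁ (R₁ x) = -x := by
    intro x
    have := ContinuousLinearMap.ext_iff.mp hR₁sq x
    simpa using this
  have hLpt : ∀ w : K₁, ContinuousLinearMap.adjoint A (R₂ (A w)) = R₁ w := by
    intro w
    have := ContinuousLinearMap.ext_iff.mp hL w
    simpa using this
  have hR₂A : ∀ w : K₁, R₂ (A w) = ContinuousLinearMap.adjoint B (R₁ w) := by
    intro w
    rw [← hLpt w, hBdagAdag]
  have hBR₂ : ∀ x : K₂, B (R₂ x) = Qi (R₁ (B x)) := by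
    intro x
    conv_lhs => rw [← hAB x, hR₂A]
    simp only [hQidef, ContinuousLinearMap.comp_apply]
  -- main algebraic identity
  have hM : ∀ x : K₂, (prj₁ ∘L B ∘L prj₂) x
      = (Complex.I * 2⁻¹) • prj₁ ((Qi - 1) (R₁ (B x))) := by
    intro x
    simp only [ContinuousLinearMap.comp_apply]
    rw [hprj₁, hprj₂]
    simp only [ContinuousLinearMap.smul_apply, ContinuousLinearMap.add_apply,
      ContinuousLinearMap.sub_apply, ContinuousLinearMap.one_apply]
    rw [map_smul, map_add, map_smul, hBR₂]
    simp only [map_add, map_smul, map_sub, hR1, smul_smul]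
    match_scalars <;> (try ring_nf; try simp [Complex.I_sq]; try ring_nf)
  -- conjugation facts
  have hBΓ : ∀ y : K₂, B (Γ₂ y) = Γ₁ (B y) := by
    intro y
    calc B (Γ₂ y) = B (Γ₂ (A (B y))) := by rw [hAB]
      _ = B (A (Γ₁ (B y))) := by rw [hLΓ]
      _ = Γ₁ (B y) := hBA _
  have hBdagΓ : ∀ z : K₁, ContinuousLinearMap.adjoint B (Γ₁ z) = Γ₂ (ContinuousLinearMap.adjoint B z) := by
    intro z
    apply ext_inner_right ℂ
    intro v
    rw [ContinuousLinearMap.adjoint_inner_left]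
    conv_lhs => rw [← hΓ₁invol (B v)]
    rw [hΓ₁inner]
    conv_rhs => rw [← hΓ₂invol v]
    rw [hΓ₂inner, ContinuousLinearMap.adjoint_inner_right, hBΓ]
  have hQiΓ : ∀ z : K₁, Qi (Γ₁ z) = Γ₁ (Qi z) := by
    intro z
    simp only [hQidef, ContinuousLinearMap.comp_apply]
    rw [hBdagΓ, hBΓ]
  have hΓ₁sub : ∀ x y, Γ₁ (x - y) = Γ₁ x - Γ₁ y := by
    intro x y
    have h : x - y = x + (-1 : ℂ) • y := by module
    rw [h, hΓ₁add, hΓ₁smul, sub_eq_add_neg]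
    congr 1
    simp
  have hC : ∀ v, ((1 - prj₁) ∘L (Qi - 1)) v = Γ₁ ((prj₁ ∘L (Qi - 1)) (Γ₁ v)) := by
    intro v
    have hm : (Qi - 1) (Γ₁ v) = Γ₁ ((Qi - 1) v) := by
      simp only [ContinuousLinearMap.sub_apply, ContinuousLinearMap.one_apply]
      rw [hQiΓ, ← hΓ₁sub]
    simp only [ContinuousLinearMap.comp_apply]
    rw [hm]
    generalize ((Qi - 1) v) = m
    rw [hprj₁]
    simp only [ContinuousLinearMap.smul_apply, ContinuousLinearMap.sub_apply,
      ContinuousLinearMap.one_apply]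
    have h1 : Γ₁ ((2:ℂ)⁻¹ • (Γ₁ m - Complex.I • R₁ (Γ₁ m))) = ((2:ℂ))⁻¹ • (m + Complex.I • R₁ m) := by
      rw [hΓ₁smul, hΓ₁sub, hΓ₁smul, hΓ₁R, hΓ₁invol]
      rw [show (star ((2:ℂ)⁻¹)) = (2:ℂ)⁻¹ by simp, show (star Complex.I) = -Complex.I by simp]
      module
    rw [h1]
    module
  constructor
  · intro h
    have hM' : prj₁ ∘L (Qi - 1)
        = (2 * Complex.I) • ((prj₁ ∘L B ∘L prj₂) ∘L (A ∘L R₁)) := by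
      apply ContinuousLinearMap.ext
      intro x
      have hx := hM (A (R₁ x))
      rw [hBA, hR1, map_neg, map_neg, smul_neg] at hx
      simp only [ContinuousLinearMap.smul_apply, ContinuousLinearMap.comp_apply] at hx ⊢
      rw [hx, smul_neg, smul_smul,
        show (2 * Complex.I) * (Complex.I * 2⁻¹) = -1 by linear_combination Complex.I_mul_I,
        neg_smul, one_smul, neg_neg]
    have h1 : IsHilbertSchmidt (prj₁ ∘L (Qi - 1)) := by
      rw [hM']
      exact (h.right_comp (A ∘L R₁)).smul _
    have h2 : IsHilbertSchmidt ((1 - prj₁) ∘L (Qi - 1)) :=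
      conj_transport Γ₁ hΓ₁add hΓ₁smul hΓ₁invol hΓ₁inner hC h1
    have h3 : IsHilbertSchmidt (Qi - 1) := by
      have := h1.add h2
      rwa [show prj₁ ∘L (Qi - 1) + (1 - prj₁) ∘L (Qi - 1) = Qi - 1 by
        rw [← ContinuousLinearMap.add_comp]
        rw [show prj₁ + (1 - prj₁) = 1 by abel]
        exact (Qi - 1).id_comp] at this
    have h4 : IsHilbertSchmidt (-(Q ∘L (Qi - 1))) := (h3.left_comp Q).neg
    rwa [show -(Q ∘L (Qi - 1)) = Q - 1 by
      apply ContinuousLinearMap.ext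
      intro x
      simp only [ContinuousLinearMap.neg_apply, ContinuousLinearMap.comp_apply,
        ContinuousLinearMap.sub_apply, ContinuousLinearMap.one_apply]
      rw [map_sub, hQQi]
      abel] at h4
  · intro h
    have h0 : IsHilbertSchmidt (Qi - 1) := by
      have := (h.left_comp Qi).neg
      rwa [show -(Qi ∘L (Q - 1)) = Qi - 1 by
        apply ContinuousLinearMap.ext
        intro x
        simp only [ContinuousLinearMap.neg_apply, ContinuousLinearMap.comp_apply,
          ContinuousLinearMap.sub_apply, ContinuousLinearMap.one_apply]
        rw [map_sub, hQiQ]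
        abel] at this
    have h1 : IsHilbertSchmidt ((Complex.I * 2⁻¹) • ((prj₁ ∘L (Qi - 1)) ∘L (R₁ ∘L B))) :=
      (((h0.left_comp prj₁).right_comp (R₁ ∘L B)).smul _)
    rwa [show (Complex.I * 2⁻¹) • ((prj₁ ∘L (Qi - 1)) ∘L (R₁ ∘L B)) = prj₁ ∘L B ∘L prj₂ by
      apply ContinuousLinearMap.ext
      intro x
      rw [show (prj₁ ∘L B ∘L prj₂) x = (Complex.I * 2⁻¹) • prj₁ ((Qi - 1) (R₁ (B x))) from hM x]
      simp only [ContinuousLinearMap.smul_apply, ContinuousLinearMap.comp_apply]] at h1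
end
end

section
/- Let a be a positive bounded operator on a complex Hilbert space with a ≥ λ for some real λ > 0 (so a is boundedly invertible). If a² − 1 is trace class, then a − 1 is trace class. -/
noncomputable section

universe u v w

/-- The square root of a (positive) bounded operator on a complex Hilbert space, given by the
continuous functional calculus applied to `Real.sqrt`; for a positive operator this is its
unique positive square root. -/
noncomputable def opSqrt {H : Type u} [NormedAddCommGroup H] [InnerProductSpace ℂ H]
    [CompleteSpace H] (A : H →L[ℂ] H) : H →L[ℂ] H :=
  cfc Real.sqrt A

/-- The absolute value `|T| := √(T† T)` of a bounded operator on a complex Hilbert space. -/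
noncomputable def opAbs {H : Type u} [NormedAddCommGroup H] [InnerProductSpace ℂ H]
    [CompleteSpace H] (T : H →L[ℂ] H) : H →L[ℂ] H :=
  opSqrt (ContinuousLinearMap.adjoint T ∘L T)

/-- A bounded operator on a complex Hilbert space is **trace class** if for some (equivalently,
every) Hilbert orthonormal basis `(e i)`, the family `i ↦ ⟪e i, |T| (e i)⟫` is summable. -/
def IsTraceClass {H : Type u} [NormedAddCommGroup H] [InnerProductSpace ℂ H] [CompleteSpace H]
    (T : H →L[ℂ] H) : Prop :=
  ∃ (ι : Type u) (b : HilbertBasis ι ℂ H), Summable fun i => (inner ℂ (b i) (opAbs T (b i)) : ℂ)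

section Aux

variable {H : Type u} [NormedAddCommGroup H] [InnerProductSpace ℂ H] [CompleteSpace H]

lemma opAbs_cfc (a : H →L[ℂ] H) (ha : IsSelfAdjoint a) (f : ℝ → ℝ) (hf : Continuous f) :
    opAbs (cfc f a) = cfc (fun t => |f t|) a := by
  have hsa : IsSelfAdjoint (cfc f a) := cfc_predicate f a
  rw [opAbs, opSqrt]
  have h1 : ContinuousLinearMap.adjoint (cfc f a) ∘L cfc f a = cfc f a * cfc f a := by
    rw [← ContinuousLinearMap.star_eq_adjoint, hsa.star_eq]; rfl
  rw [h1, ← cfc_mul f f a, ← cfc_comp' Real.sqrt (fun t => f t * f t) a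
    (Real.continuous_sqrt.continuousOn) (by fun_prop)]
  exact cfc_congr fun t _ => Real.sqrt_mul_self_eq_abs (f t)

lemma cfc_sub_one' (a : H →L[ℂ] H) (ha : IsSelfAdjoint a) :
    cfc (fun t : ℝ => t - 1) a = a - 1 := by
  rw [cfc_sub (fun t : ℝ => t) (fun _ : ℝ => (1 : ℝ)) a, cfc_id' ℝ a, cfc_const_one ℝ a]

lemma cfc_sq_sub_one' (a : H →L[ℂ] H) (ha : IsSelfAdjoint a) :
    cfc (fun t : ℝ => t * t - 1) a = a * a - 1 := by
  rw [cfc_sub (fun t : ℝ => t * t) (fun _ : ℝ => (1 : ℝ)) a,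
    cfc_mul (fun t : ℝ => t) (fun t : ℝ => t) a, cfc_id' ℝ a, cfc_const_one ℝ a]

lemma spectrum_lower (a : H →L[ℂ] H) (ha : a.IsPositive)
    (lam : ℝ) (hbound : ∀ x : H, lam * ‖x‖ ^ 2 ≤ (inner ℂ x (a x) : ℂ).re) :
    ∀ t ∈ spectrum ℝ a, lam ≤ t := by
  have hpos : (0 : H →L[ℂ] H) ≤ a - algebraMap ℝ (H →L[ℂ] H) lam := by
    rw [ContinuousLinearMap.nonneg_iff_isPositive]
    constructor
    · exact ContinuousLinearMap.isSelfAdjoint_iff_isSymmetric.mp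
        (ha.isSelfAdjoint.sub ((IsSelfAdjoint.all lam).algebraMap _))
    · intro x
      have h1 : ((a - algebraMap ℝ (H →L[ℂ] H) lam) x) = a x - (lam : ℂ) • x := by
        simp [Algebra.algebraMap_eq_smul_one, ContinuousLinearMap.smul_apply]
      rw [ContinuousLinearMap.reApplyInnerSelf_apply, h1, inner_sub_left]
      have h2 := hbound x
      rw [show (inner ℂ x (a x) : ℂ).re = RCLike.re (inner ℂ x (a x) : ℂ) from rfl,
        inner_re_symm] at h2
      have h5 : (inner ℂ ((lam : ℂ) • x) x : ℂ) = (lam : ℂ) * inner ℂ x x := by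
        rw [inner_smul_left]; simp
      have h7 : RCLike.re ((lam : ℂ) * (inner ℂ x x : ℂ)) = lam * ‖x‖ ^ 2 := by
        rw [show ((lam : ℂ)) = RCLike.ofReal lam from rfl, RCLike.re_ofReal_mul,
          inner_self_eq_norm_sq]
      rw [map_sub, h5, h7]
      linarith
  intro t ht
  have h6 : t - lam ∈ spectrum ℝ (a - algebraMap ℝ (H →L[ℂ] H) lam) := by
    rw [← spectrum.sub_singleton_eq]
    exact Set.sub_mem_sub ht rfl
  have := spectrum_nonneg_of_nonneg hpos h6
  linarith

lemma inner_real_of_isPositive (T : H →L[ℂ] H) (hT : T.IsPositive) (x : H) :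
    (inner ℂ x (T x) : ℂ) = (((inner ℂ x (T x) : ℂ)).re : ℂ) := by
  obtain ⟨h1, -⟩ := (ContinuousLinearMap.isPositive_iff_complex T).mp hT x
  have h2 : (inner ℂ x (T x) : ℂ) = ((RCLike.re (inner ℂ (T x) x : ℂ) : ℝ) : ℂ) := by
    rw [← inner_conj_symm x (T x), ← h1]
    simp [Complex.conj_ofReal]
  rw [h2]
  simp

end Aux

/-- If `a` is a positive bounded operator with `a ≥ λ > 0` and `a² - 1` is trace class, then
`a - 1` is trace class. -/
theorem traceClass_of_sq_traceClass
    {H : Type u} [NormedAddCommGroup H] [InnerProductSpace ℂ H] [CompleteSpace H]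
    (a : H →L[ℂ] H) (ha : a.IsPositive)
    (lam : ℝ) (hlam : 0 < lam)
    (hbound : ∀ x : H, lam * ‖x‖ ^ 2 ≤ (inner ℂ x (a x) : ℂ).re)
    (hsq : IsTraceClass (a * a - 1)) :
    IsTraceClass (a - 1) := by
  obtain ⟨ι, b, hsum⟩ := hsq
  have hsa := ha.isSelfAdjoint
  have hspec : ∀ t ∈ spectrum ℝ a, lam ≤ t := spectrum_lower a ha lam hbound
  set c : ℝ := (1 + lam)⁻¹ with hc
  have e1 : opAbs (a - 1) = cfc (fun t : ℝ => |t - 1|) a := by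
    conv_lhs => rw [← cfc_sub_one' a hsa]
    rw [opAbs_cfc a hsa _ (by fun_prop)]
  have e2 : opAbs (a * a - 1) = cfc (fun t : ℝ => |t * t - 1|) a := by
    conv_lhs => rw [← cfc_sq_sub_one' a hsa]
    rw [opAbs_cfc a hsa _ (by fun_prop)]
  have hP1 : (opAbs (a - 1)).IsPositive := by
    rw [← ContinuousLinearMap.nonneg_iff_isPositive, e1]
    exact cfc_nonneg fun t _ => abs_nonneg _
  have hP2 : (opAbs (a * a - 1)).IsPositive := by
    rw [← ContinuousLinearMap.nonneg_iff_isPositive, e2]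
    exact cfc_nonneg fun t _ => abs_nonneg _
  have hle : opAbs (a - 1) ≤ c • opAbs (a * a - 1) := by
    rw [e1, e2, ← cfc_const_mul c (fun t : ℝ => |t * t - 1|) a (by fun_prop)]
    refine cfc_mono fun t ht => ?_
    have hlt := hspec t ht
    have h1 : |t * t - 1| = |t - 1| * (t + 1) := by
      rw [show t * t - 1 = (t - 1) * (t + 1) by ring, abs_mul,
        abs_of_pos (by linarith : (0:ℝ) < t + 1)]
    rw [h1, hc, inv_mul_eq_div, le_div_iff₀ (by linarith)]
    have := abs_nonneg (t - 1)
    nlinarith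
  refine ⟨ι, b, ?_⟩
  have hre : Summable (fun i => ((inner ℂ (b i) (opAbs (a * a - 1) (b i)) : ℂ)).re) := by
    have := hsum.map Complex.reCLM Complex.reCLM.continuous
    exact this
  have hptw : ∀ i, ((inner ℂ (b i) (opAbs (a - 1) (b i)) : ℂ)).re
      ≤ c * ((inner ℂ (b i) (opAbs (a * a - 1) (b i)) : ℂ)).re := by
    intro i
    have h2 := hle
    rw [ContinuousLinearMap.le_def] at h2
    have h3 := (RCLike.nonneg_iff.mp (h2.inner_nonneg_right (b i))).1
    have h4 : ((c • opAbs (a * a - 1) - opAbs (a - 1) : H →L[ℂ] H) (b i))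
        = (c : ℂ) • (opAbs (a * a - 1) (b i)) - opAbs (a - 1) (b i) := by
      rw [ContinuousLinearMap.sub_apply, ContinuousLinearMap.smul_apply,
        RCLike.real_smul_eq_coe_smul (K := ℂ)]
      rfl
    rw [h4, inner_sub_right, inner_smul_right, map_sub] at h3
    have h5 : RCLike.re ((c : ℂ) * (inner ℂ (b i) (opAbs (a * a - 1) (b i)) : ℂ))
        = c * ((inner ℂ (b i) (opAbs (a * a - 1) (b i)) : ℂ)).re := by
      rw [show ((c : ℂ)) = RCLike.ofReal c from rfl, RCLike.re_ofReal_mul]; rfl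
    rw [h5] at h3
    have h6 : RCLike.re (inner ℂ (b i) (opAbs (a - 1) (b i)) : ℂ)
        = ((inner ℂ (b i) (opAbs (a - 1) (b i)) : ℂ)).re := rfl
    rw [h6] at h3
    linarith
  have hnn : ∀ i, 0 ≤ ((inner ℂ (b i) (opAbs (a - 1) (b i)) : ℂ)).re := fun i => by
    exact (RCLike.nonneg_iff.mp (hP1.inner_nonneg_right (b i))).1
  have hsummre : Summable (fun i => ((inner ℂ (b i) (opAbs (a - 1) (b i)) : ℂ)).re) :=
    Summable.of_nonneg_of_le hnn hptw (hre.mul_left c)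
  have heq : (fun i => (inner ℂ (b i) (opAbs (a - 1) (b i)) : ℂ))
      = fun i => (((inner ℂ (b i) (opAbs (a - 1) (b i)) : ℂ)).re : ℂ) :=
    funext fun i => inner_real_of_isPositive _ hP1 _
  rw [heq]
  exact (hsummre.map Complex.ofRealCLM Complex.ofRealCLM.continuous).congr fun i => by simp
end
end

section
/- Let H₁ and H₂ be complex Hilbert spaces and let T be a positive bounded operator on the Hilbert space direct sum H₁ ⊕ H₂. Write T in block form: A := P₁ ∘ T ∘ ι₁ : H₁ → H₁, B := P₁ ∘ T ∘ ι₂ : H₂ → H₁, C := P₂ ∘ T ∘ ι₂ : H₂ → H₂, where ι_j are the isometric inclusions and P_j = ι_j† the coordinate projections. Assume A ≥ α for some real α > 0 (so A is boundedly invertible). Then C − B† ∘ A⁻¹ ∘ B is positive; consequently C ≥ ‖A‖⁻¹ · B† ∘ B, and if C is trace class then B is Hilbert–Schmidt. -/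
noncomputable section

universe u v w

open ContinuousLinearMap

local notation "⟪" x ", " y "⟫" => @inner ℂ _ _ x y

/-- Cauchy–Schwarz for the semi-inner product of a positive operator. -/
lemma cs_pos {H' : Type*} [NormedAddCommGroup H'] [InnerProductSpace ℂ H'] [CompleteSpace H']
    {A : H' →L[ℂ] H'} (hA : A.IsPositive) (u v : H') :
    (⟪u, A v⟫).re ^ 2 ≤ (⟪u, A u⟫).re * (⟪v, A v⟫).re := by
  have hsym := (isSelfAdjoint_iff_isSymmetric).mp hA.isSelfAdjoint
  have q : ∀ t : ℝ, 0 ≤ (⟪v, A v⟫).re * (t * t) + (2 * (⟪u, A v⟫).re) * t + (⟪u, A u⟫).re := by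
    intro t
    have h0 : 0 ≤ (⟪u + (t:ℂ) • v, A (u + (t:ℂ) • v)⟫).re := hA.re_inner_nonneg_right _
    have hx : ⟪u + (t:ℂ) • v, A (u + (t:ℂ) • v)⟫
        = ⟪u, A u⟫ + (t:ℂ) * ⟪u, A v⟫ + (t:ℂ) * ⟪v, A u⟫ + (t:ℂ) * ((t:ℂ) * ⟪v, A v⟫) := by
      simp only [map_add, map_smul, inner_add_left, inner_add_right, inner_smul_left,
        inner_smul_right, Complex.conj_ofReal]
      ring
    have h' : ⟪A u, v⟫ = ⟪u, A v⟫ := hsym u v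
    have hvu : (⟪v, A u⟫).re = (⟪u, A v⟫).re := by
      rw [← inner_conj_symm v (A u), h', Complex.conj_re]
    rw [hx] at h0
    simp only [Complex.add_re, Complex.re_ofReal_mul] at h0
    rw [hvu] at h0
    nlinarith [h0]
  have hd := discrim_le_zero q
  rw [discrim] at hd
  nlinarith [hd]

lemma opAbs_of_isPositive {H : Type*} [NormedAddCommGroup H] [InnerProductSpace ℂ H]
    [CompleteSpace H] {C : H →L[ℂ] H} (hC : C.IsPositive) : opAbs C = C := by
  have hsa : IsSelfAdjoint C := hC.isSelfAdjoint
  have hnn : (0 : H →L[ℂ] H) ≤ C := C.nonneg_iff_isPositive.mpr hC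
  have had : ContinuousLinearMap.adjoint C = C := isSelfAdjoint_iff'.mp hsa
  have hmul : ContinuousLinearMap.adjoint C ∘L C = C ^ 2 := by rw [had, sq]; rfl
  rw [opAbs, opSqrt, hmul]
  have h2 : C ^ 2 = cfc (fun x : ℝ => x ^ 2) C := (cfc_pow_id C 2 hsa).symm
  rw [h2, ← cfc_comp' Real.sqrt (fun x : ℝ => x ^ 2) C (by fun_prop) (by fun_prop)]
  have hcong : (spectrum ℝ C).EqOn (fun x : ℝ => Real.sqrt (x ^ 2)) id := by
    intro x hx
    simp only [id_eq]
    rw [Real.sqrt_sq (spectrum_nonneg_of_nonneg hnn hx)]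
  rw [cfc_congr hcong, cfc_id ℝ C hsa]

set_option maxHeartbeats 1000000

/-- Block bounds for a positive operator on a direct sum `H₁ ⊕ H₂` (realized inside `H` by
isometric inclusions `i1`, `i2` with orthogonal ranges spanning `H`). If the block `A` obeys
`A ≥ α > 0`, then the Schur complement `C - B† A⁻¹ B` is positive; consequently
`C ≥ ‖A‖⁻¹ B† B`, and if `C` is trace class then `B` is Hilbert–Schmidt. -/
theorem block_positivity_schur
    {H₁ : Type u} {H₂ : Type v} {H : Type w}
    [NormedAddCommGroup H₁] [InnerProductSpace ℂ H₁] [CompleteSpace H₁]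
    [NormedAddCommGroup H₂] [InnerProductSpace ℂ H₂] [CompleteSpace H₂]
    [NormedAddCommGroup H] [InnerProductSpace ℂ H] [CompleteSpace H]
    (i1 : H₁ →L[ℂ] H) (i2 : H₂ →L[ℂ] H)
    (hi1 : ContinuousLinearMap.adjoint i1 ∘L i1 = 1)
    (hi2 : ContinuousLinearMap.adjoint i2 ∘L i2 = 1)
    (horth : ContinuousLinearMap.adjoint i1 ∘L i2 = 0)
    (hspan : i1 ∘L ContinuousLinearMap.adjoint i1 + i2 ∘L ContinuousLinearMap.adjoint i2 = 1)
    (T : H →L[ℂ] H) (hT : T.IsPositive)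
    (A : H₁ →L[ℂ] H₁) (B : H₂ →L[ℂ] H₁) (C : H₂ →L[ℂ] H₂)
    (hA : A = ContinuousLinearMap.adjoint i1 ∘L T ∘L i1)
    (hB : B = ContinuousLinearMap.adjoint i1 ∘L T ∘L i2)
    (hC : C = ContinuousLinearMap.adjoint i2 ∘L T ∘L i2)
    (α : ℝ) (hα : 0 < α)
    (hAα : ∀ x : H₁, α * ‖x‖ ^ 2 ≤ (inner ℂ x (A x) : ℂ).re) :
    (∃ A' : H₁ →L[ℂ] H₁, A ∘L A' = 1 ∧ A' ∘L A = 1 ∧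
        (C - ContinuousLinearMap.adjoint B ∘L A' ∘L B).IsPositive) ∧
      (C - ‖A‖⁻¹ • (ContinuousLinearMap.adjoint B ∘L B)).IsPositive ∧
      (IsTraceClass C → IsHilbertSchmidt B) := by
  have hTsa : IsSelfAdjoint T := hT.isSelfAdjoint
  have hTadj : ContinuousLinearMap.adjoint T = T := isSelfAdjoint_iff'.mp hTsa
  have hsymT : ∀ (a b : H), ⟪T a, b⟫ = ⟪a, T b⟫ := fun a b => by
    conv_lhs => rw [← hTadj]
    exact adjoint_inner_left T b a
  have hApos : A.IsPositive := by rw [hA]; exact hT.adjoint_conj i1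
  have hCpos : C.IsPositive := by rw [hC]; exact hT.adjoint_conj i2
  have hAadj : ContinuousLinearMap.adjoint A = A := isSelfAdjoint_iff'.mp hApos.isSelfAdjoint
  have hCadj : ContinuousLinearMap.adjoint C = C := isSelfAdjoint_iff'.mp hCpos.isSelfAdjoint
  have hsymA : ∀ (a b : H₁), ⟪A a, b⟫ = ⟪a, A b⟫ := fun a b => by
    conv_lhs => rw [← hAadj]
    exact adjoint_inner_left A b a
  have hsymC : ∀ (a b : H₂), ⟪C a, b⟫ = ⟪a, C b⟫ := fun a b => by
    conv_lhs => rw [← hCadj]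
    exact adjoint_inner_left C b a
  -- invertibility of A
  have hAunit : IsUnit A := by
    apply isUnit_of_forall_le_norm_inner_map A (c := ⟨α, hα.le⟩)
    · exact_mod_cast hα
    · intro x
      have h1 := hAα x
      have h2 : (⟪x, A x⟫).re ≤ ‖⟪A x, x⟫‖ := by
        calc (⟪x, A x⟫).re ≤ ‖⟪x, A x⟫‖ := Complex.re_le_norm _
          _ = ‖⟪A x, x⟫‖ := by rw [← inner_conj_symm (A x) x, RCLike.norm_conj]
      calc ‖x‖ ^ 2 * ((⟨α, hα.le⟩ : NNReal) : ℝ) = α * ‖x‖ ^ 2 := by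
            simp [NNReal.coe_mk]; ring
        _ ≤ (⟪x, A x⟫).re := h1
        _ ≤ ‖⟪A x, x⟫‖ := h2
  obtain ⟨u, hu⟩ := hAunit
  set A' : H₁ →L[ℂ] H₁ := ((u⁻¹ : (H₁ →L[ℂ] H₁)ˣ) : H₁ →L[ℂ] H₁) with hA'def
  have hAA' : A ∘L A' = 1 := by
    rw [← ContinuousLinearMap.mul_def, hA'def, ← hu]
    exact u.mul_inv
  have hA'A : A' ∘L A = 1 := by
    rw [← ContinuousLinearMap.mul_def, hA'def, ← hu]
    exact u.inv_mul
  have hAA'f : ∀ v : H₁, A (A' v) = v := fun v => by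
    have := DFunLike.congr_fun hAA' v
    simpa using this
  have hA'adj : ContinuousLinearMap.adjoint A' = A' := by
    have h1 : ContinuousLinearMap.adjoint A' ∘L A = 1 := by
      have h := congrArg ContinuousLinearMap.adjoint hAA'
      rw [adjoint_comp, hAadj] at h
      rwa [show ContinuousLinearMap.adjoint (1 : H₁ →L[ℂ] H₁) = 1 from by
        rw [ContinuousLinearMap.one_def, adjoint_id]] at h
    calc ContinuousLinearMap.adjoint A'
        = ContinuousLinearMap.adjoint A' ∘L (A ∘L A') := by rw [hAA']; ext x; simp
      _ = (ContinuousLinearMap.adjoint A' ∘L A) ∘L A' := by rw [comp_assoc]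
      _ = A' := by rw [h1]; ext x; simp
  have hsymA' : ∀ (a b : H₁), ⟪A' a, b⟫ = ⟪a, A' b⟫ := fun a b => by
    conv_lhs => rw [← hA'adj]
    exact adjoint_inner_left A' b a
  -- block inner product identities
  have e1 : ∀ (x x' : H₁), ⟪T (i1 x), i1 x'⟫ = ⟪A x, x'⟫ := fun x x' => by
    rw [hA]
    exact (adjoint_inner_left i1 x' (T (i1 x))).symm
  have e4 : ∀ (y y' : H₂), ⟪T (i2 y), i2 y'⟫ = ⟪C y, y'⟫ := fun y y' => by
    rw [hC]
    exact (adjoint_inner_left i2 y' (T (i2 y))).symm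
  have e3 : ∀ (y : H₂) (x : H₁), ⟪T (i2 y), i1 x⟫ = ⟪B y, x⟫ := fun y x => by
    rw [hB]
    exact (adjoint_inner_left i1 x (T (i2 y))).symm
  have e2 : ∀ (x : H₁) (y : H₂), ⟪T (i1 x), i2 y⟫ = ⟪(ContinuousLinearMap.adjoint B) x, y⟫ :=
    fun x y => by
      rw [adjoint_inner_left B y x, hB]
      calc ⟪T (i1 x), i2 y⟫ = ⟪i1 x, T (i2 y)⟫ := hsymT _ _
        _ = ⟪x, (ContinuousLinearMap.adjoint i1) (T (i2 y))⟫ :=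
            (adjoint_inner_right i1 x (T (i2 y))).symm
        _ = ⟪x, (ContinuousLinearMap.adjoint i1 ∘L (T ∘L i2)) y⟫ := rfl
  have hexp : ∀ (x : H₁) (y : H₂), ⟪T (i1 x + i2 y), i1 x + i2 y⟫
      = ⟪A x, x⟫ + ⟪(ContinuousLinearMap.adjoint B) x, y⟫ + ⟪B y, x⟫ + ⟪C y, y⟫ := by
    intro x y
    rw [map_add, inner_add_left, inner_add_right, inner_add_right, e1, e2, e3, e4]
    ring
  -- the Schur complement identity
  have hschur : ∀ y : H₂,
      ⟪(C - ContinuousLinearMap.adjoint B ∘L A' ∘L B) y, y⟫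
        = ⟪T (i1 (-(A' (B y))) + i2 y), i1 (-(A' (B y))) + i2 y⟫ := by
    intro y
    rw [hexp]
    simp only [map_neg, inner_neg_left, inner_neg_right, neg_neg, hAA'f (B y),
      ContinuousLinearMap.sub_apply, ContinuousLinearMap.comp_apply, inner_sub_left]
    ring
  have hschurpos : ∀ y : H₂,
      0 ≤ (⟪(C - ContinuousLinearMap.adjoint B ∘L A' ∘L B) y, y⟫).re := by
    intro y
    rw [hschur y]
    exact hT.re_inner_nonneg_left _
  -- norm lower bound for A'
  have hA'bound : ∀ v : H₁, ‖A‖⁻¹ * ‖v‖ ^ 2 ≤ (⟪v, A' v⟫).re := by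
    intro v
    by_cases h0 : A = 0
    · have hv : v = 0 := by
        have h1 := hAα v
        rw [h0] at h1
        simp only [ContinuousLinearMap.zero_apply, inner_zero_right, Complex.zero_re] at h1
        have h2 : ‖v‖ ^ 2 ≤ 0 := le_of_mul_le_mul_left (by rw [mul_zero]; exact h1) hα
        have h3 : ‖v‖ ^ 2 = 0 := le_antisymm h2 (sq_nonneg _)
        exact norm_eq_zero.mp (pow_eq_zero_iff two_ne_zero |>.mp h3)
      simp [hv]
    · have hN : (0 : ℝ) < ‖A‖ := norm_pos_iff.mpr h0
      set w := A' v with hw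
      have hvw : A w = v := hAA'f v
      have hcs := cs_pos hApos w (A w)
      have h1 : (⟪w, A (A w)⟫).re = ‖A w‖ ^ 2 := by
        rw [← hsymA w (A w)]
        have : ⟪A w, A w⟫ = (‖A w‖ : ℂ) ^ 2 := inner_self_eq_norm_sq_to_K (𝕜 := ℂ) (A w)
        rw [this, ← Complex.ofReal_pow, Complex.ofReal_re]
      have h2 : (⟪A w, A (A w)⟫).re ≤ ‖A‖ * ‖A w‖ ^ 2 := by
        calc (⟪A w, A (A w)⟫).re ≤ ‖⟪A w, A (A w)⟫‖ := Complex.re_le_norm _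
          _ ≤ ‖A w‖ * ‖A (A w)‖ := norm_inner_le_norm _ _
          _ ≤ ‖A w‖ * (‖A‖ * ‖A w‖) := by
              have := A.le_opNorm (A w)
              nlinarith [norm_nonneg (A w)]
          _ = ‖A‖ * ‖A w‖ ^ 2 := by ring
      have h4 : 0 ≤ (⟪w, A w⟫).re := hApos.re_inner_nonneg_right w
      have h3 : (⟪v, A' v⟫).re = (⟪w, A w⟫).re := by
        have hv' : A' v = w := rfl
        calc (⟪v, A' v⟫).re = (⟪A w, w⟫).re := by rw [hv', ← hvw]
          _ = (⟪w, A w⟫).re := by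
            rw [← inner_conj_symm w (A w), Complex.conj_re]
      rw [h3, ← hvw]
      rw [inv_mul_le_iff₀ hN]
      rw [h1] at hcs
      by_cases hz : ‖A w‖ = 0
      · rw [hz]
        simpa using mul_nonneg hN.le h4
      · have hp : (0 : ℝ) < ‖A w‖ ^ 2 := by positivity
        have h6 := mul_le_mul_of_nonneg_left h2 h4
        have h7 : ‖A w‖ ^ 2 * ‖A w‖ ^ 2 ≤ (‖A‖ * (⟪w, A w⟫).re) * ‖A w‖ ^ 2 := by
          have hcs' := hcs.trans h6
          nlinarith only [hcs']
        exact le_of_mul_le_mul_right h7 hp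
  -- key inequality
  have hkey : ∀ y : H₂, ‖A‖⁻¹ * ‖B y‖ ^ 2 ≤ (⟪C y, y⟫).re := by
    intro y
    have h1 := hschurpos y
    simp only [ContinuousLinearMap.sub_apply, ContinuousLinearMap.comp_apply,
      inner_sub_left, Complex.sub_re] at h1
    have h2 : (⟪(ContinuousLinearMap.adjoint B) (A' (B y)), y⟫) = ⟪A' (B y), B y⟫ :=
      adjoint_inner_left B y (A' (B y))
    rw [h2] at h1
    have h3 := hA'bound (B y)
    have h4 : (⟪B y, A' (B y)⟫).re = (⟪A' (B y), B y⟫).re := by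
      rw [← inner_conj_symm (B y) (A' (B y)), Complex.conj_re]
    linarith only [h1, h3, h4]
  -- Part 1: the Schur complement is positive
  have hBBadj : ContinuousLinearMap.adjoint (ContinuousLinearMap.adjoint B ∘L A' ∘L B)
      = ContinuousLinearMap.adjoint B ∘L A' ∘L B := by
    rw [adjoint_comp, adjoint_comp, adjoint_adjoint, hA'adj, comp_assoc]
  have part1 : (C - ContinuousLinearMap.adjoint B ∘L A' ∘L B).IsPositive := by
    constructor
    · rw [← isSelfAdjoint_iff_isSymmetric, isSelfAdjoint_iff', map_sub, hCadj, hBBadj]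
    · intro y
      rw [reApplyInnerSelf_apply]
      exact hschurpos y
  -- Part 2
  have part2 : (C - ‖A‖⁻¹ • (ContinuousLinearMap.adjoint B ∘L B)).IsPositive := by
    constructor
    · intro x y
      show ⟪(C - ‖A‖⁻¹ • (ContinuousLinearMap.adjoint B ∘L B)) x, y⟫
          = ⟪x, (C - ‖A‖⁻¹ • (ContinuousLinearMap.adjoint B ∘L B)) y⟫
      have hsm : ∀ a : H₂, ‖A‖⁻¹ • a = ((‖A‖⁻¹ : ℝ) : ℂ) • a := fun a =>
        RCLike.real_smul_eq_coe_smul (K := ℂ) _ _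
      simp only [ContinuousLinearMap.sub_apply, ContinuousLinearMap.smul_apply,
        ContinuousLinearMap.comp_apply, inner_sub_left, inner_sub_right, hsm,
        inner_smul_left, inner_smul_right, Complex.conj_ofReal]
      rw [adjoint_inner_left B, adjoint_inner_right B, hsymC]
    · intro y
      rw [reApplyInnerSelf_apply]
      have h1 : (⟪(C - ‖A‖⁻¹ • (ContinuousLinearMap.adjoint B ∘L B)) y, y⟫).re
          = (⟪C y, y⟫).re - ‖A‖⁻¹ * ‖B y‖ ^ 2 := by
        have hsm : ∀ a : H₂, ‖A‖⁻¹ • a = ((‖A‖⁻¹ : ℝ) : ℂ) • a := fun a =>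
          RCLike.real_smul_eq_coe_smul (K := ℂ) _ _
        simp only [ContinuousLinearMap.sub_apply, ContinuousLinearMap.smul_apply,
          ContinuousLinearMap.comp_apply, inner_sub_left, Complex.sub_re, hsm,
          inner_smul_left, Complex.conj_ofReal]
        congr 1
        have h2 : (⟪(ContinuousLinearMap.adjoint B) (B y), y⟫) = ⟪B y, B y⟫ :=
          adjoint_inner_left B y (B y)
        rw [h2]
        have h3 : ⟪B y, B y⟫ = (‖B y‖ : ℂ) ^ 2 := inner_self_eq_norm_sq_to_K (𝕜 := ℂ) (B y)
        rw [h3, ← Complex.ofReal_pow, Complex.re_ofReal_mul, Complex.ofReal_re]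
      show 0 ≤ (⟪(C - ‖A‖⁻¹ • (ContinuousLinearMap.adjoint B ∘L B)) y, y⟫).re
      rw [h1]
      have h5 := hkey y
      linarith only [h5]
  refine ⟨⟨A', hAA', hA'A, part1⟩, part2, ?_⟩
  -- Part 3
  intro hTC
  obtain ⟨ι, b, hsum⟩ := hTC
  rw [opAbs_of_isPositive hCpos] at hsum
  refine ⟨ι, b, ?_⟩
  have hre : Summable fun i => (⟪b i, C (b i)⟫).re := by
    have := hsum.map Complex.reAddGroupHom Complex.continuous_re
    exact this
  by_cases h0 : A = 0
  · have hBz : ∀ y : H₂, B y = 0 := by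
      intro y
      have h1 := hAα (B y)
      rw [h0] at h1
      simp only [ContinuousLinearMap.zero_apply, inner_zero_right, Complex.zero_re] at h1
      have h2 : ‖B y‖ ^ 2 ≤ 0 := le_of_mul_le_mul_left (by rw [mul_zero]; exact h1) hα
      have h3 : ‖B y‖ ^ 2 = 0 := le_antisymm h2 (sq_nonneg _)
      exact norm_eq_zero.mp (pow_eq_zero_iff two_ne_zero |>.mp h3)
    have : (fun i => ‖B (b i)‖ ^ 2) = fun _ => (0 : ℝ) := by
      funext i; rw [hBz (b i)]; simp
    rw [this]
    exact summable_zero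
  · have hN : (0 : ℝ) < ‖A‖ := norm_pos_iff.mpr h0
    apply Summable.of_nonneg_of_le (fun i => sq_nonneg _) (fun i => ?_) (hre.mul_left ‖A‖)
    have h1 := hkey (b i)
    have h2 : (⟪b i, C (b i)⟫).re = (⟪C (b i), b i⟫).re := by
      rw [← inner_conj_symm (b i) (C (b i)), Complex.conj_re]
    rw [h2]
    calc ‖B (b i)‖ ^ 2 = ‖A‖ * (‖A‖⁻¹ * ‖B (b i)‖ ^ 2) := by
          field_simp
      _ ≤ ‖A‖ * (⟪C (b i), b i⟫).re := by
          apply mul_le_mul_of_nonneg_left h1 hN.le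
end
end

section
/- For all real numbers u and v with 0 < u ≤ 1 ≤ v, there exists a constant C > 0 such that for every natural number m and every x : Fin m → ℝ with u ≤ x j ≤ v for all j, one has ∏_{j} (x j + (x j)⁻¹)/2 ≥ 1 + C · ∑_{j} (x j − 1)², with the constant C independent of m. -/
lemma one_add_sum_le_prod_aux {ι : Type*} (s : Finset ι) (a : ι → ℝ)
    (ha : ∀ i ∈ s, 0 ≤ a i) : 1 + ∑ i ∈ s, a i ≤ ∏ i ∈ s, (1 + a i) := by
  classical
  induction s using Finset.induction_on with
  | empty => simp
  | insert _ _ hnot ih =>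
    rename_i j s
    rw [Finset.sum_insert hnot, Finset.prod_insert hnot]
    have haj : 0 ≤ a j := ha j (Finset.mem_insert_self _ _)
    have hs : ∀ i ∈ s, 0 ≤ a i := fun i hi => ha i (Finset.mem_insert_of_mem hi)
    have hsum : 0 ≤ ∑ i ∈ s, a i := Finset.sum_nonneg hs
    have h1 := ih hs
    nlinarith [h1, haj, hsum]

/-- Uniform lower bound: for `0 < u ≤ 1 ≤ v` there is a constant `C > 0`, independent of `m`,
such that whenever `u ≤ x j ≤ v` for all `j ∈ Fin m`, one has
`∏ j, (x j + (x j)⁻¹)/2 ≥ 1 + C * ∑ j, (x j - 1)²`. -/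
theorem prod_ge_one_add_sum_sq (u v : ℝ) (hu : 0 < u) (hu1 : u ≤ 1) (h1v : 1 ≤ v) :
    ∃ C : ℝ, 0 < C ∧ ∀ (m : ℕ) (x : Fin m → ℝ),
      (∀ j, u ≤ x j) → (∀ j, x j ≤ v) →
      1 + C * ∑ j, (x j - 1) ^ 2 ≤ ∏ j, (x j + (x j)⁻¹) / 2 := by
  have hv : (0:ℝ) < v := lt_of_lt_of_le one_pos h1v
  refine ⟨1 / (2 * v), by positivity, ?_⟩
  intro m x hl hr
  have key : ∀ j, 1 + (1 / (2 * v)) * (x j - 1) ^ 2 ≤ (x j + (x j)⁻¹) / 2 := by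
    intro j
    have hx : 0 < x j := lt_of_lt_of_le hu (hl j)
    have hxv : x j ≤ v := hr j
    have hinv : (x j)⁻¹ = 1 / x j := by rw [one_div]
    rw [hinv]
    have h2 : (x j + 1 / x j) / 2 = 1 + (x j - 1)^2 / (2 * x j) := by
      field_simp; ring
    rw [h2]
    have : (x j - 1)^2 / (2 * v) ≤ (x j - 1)^2 / (2 * x j) := by
      apply div_le_div_of_nonneg_left (by positivity) (by positivity)
      linarith
    calc 1 + (1 / (2 * v)) * (x j - 1) ^ 2 = 1 + (x j - 1)^2 / (2 * v) := by ring
      _ ≤ 1 + (x j - 1)^2 / (2 * x j) := by linarith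
  calc 1 + (1 / (2 * v)) * ∑ j, (x j - 1) ^ 2
      = 1 + ∑ j, (1 / (2 * v)) * (x j - 1) ^ 2 := by rw [Finset.mul_sum]
    _ ≤ ∏ j, (1 + (1 / (2 * v)) * (x j - 1) ^ 2) :=
        one_add_sum_le_prod_aux _ _ (fun i _ => by positivity)
    _ ≤ ∏ j, (x j + (x j)⁻¹) / 2 := by
        apply Finset.prod_le_prod (fun i _ => by positivity) (fun i _ => key i)
end

section
/- Let q : ℕ → ℝ satisfy q j > 0 for every j. If the family j ↦ (q j − 1)² is summable, then the family j ↦ log((√(q j) + 1/√(q j))/2) is summable (each term is nonnegative since t + t⁻¹ ≥ 2 for t > 0); equivalently, the infinite product ∏_j (√(q j) + 1/√(q j))/2 converges. -/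
lemma aux_pos {x : ℝ} (hx : 0 < x) :
    0 < (Real.sqrt x + 1 / Real.sqrt x) / 2 := by
  have ht : 0 < Real.sqrt x := Real.sqrt_pos.mpr hx
  positivity

lemma aux_one_le {x : ℝ} (hx : 0 < x) :
    1 ≤ (Real.sqrt x + 1 / Real.sqrt x) / 2 := by
  have ht : 0 < Real.sqrt x := Real.sqrt_pos.mpr hx
  rw [le_div_iff₀ (by norm_num : (0:ℝ) < 2), ← sub_nonneg]
  have : Real.sqrt x + 1 / Real.sqrt x - 1 * 2 = (Real.sqrt x - 1) ^ 2 / Real.sqrt x := by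
    field_simp
    nlinarith [Real.sq_sqrt hx.le]
  rw [this]; positivity

lemma aux_log_nonneg {x : ℝ} (hx : 0 < x) :
    0 ≤ Real.log ((Real.sqrt x + 1 / Real.sqrt x) / 2) :=
  Real.log_nonneg (aux_one_le hx)

lemma aux_log_le {x : ℝ} (hx : 0 < x) (hx2 : (x - 1) ^ 2 ≤ 1 / 4) :
    Real.log ((Real.sqrt x + 1 / Real.sqrt x) / 2) ≤ (x - 1) ^ 2 := by
  set t := Real.sqrt x with ht
  have htpos : 0 < t := Real.sqrt_pos.mpr hx
  have htsq : t ^ 2 = x := Real.sq_sqrt hx.le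
  have hxhalf : (1 : ℝ) / 2 ≤ x := by nlinarith [sq_nonneg (x - 1)]
  have h1 : Real.log ((t + 1 / t) / 2) ≤ (t + 1 / t) / 2 - 1 :=
    Real.log_le_sub_one_of_pos (aux_pos hx)
  have h2 : (t + 1 / t) / 2 - 1 = (t - 1) ^ 2 / (2 * t) := by
    field_simp
    ring
  have h3 : (t - 1) ^ 2 / (2 * t) ≤ (x - 1) ^ 2 := by
    rw [div_le_iff₀ (by positivity)]
    have hx1 : (x - 1) ^ 2 = (t - 1) ^ 2 * (t + 1) ^ 2 := by
      have : x - 1 = (t - 1) * (t + 1) := by nlinarith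
      rw [this]; ring
    rw [hx1]
    have ht2 : (1 : ℝ) / 2 ≤ t ^ 2 := by nlinarith
    nlinarith [sq_nonneg (t - 1), htpos, ht2]
  linarith [h1, h2 ▸ h1]

/-- If `∑ (q j - 1)²` converges (with `q j > 0`), then `∑ log((√(q j) + 1/√(q j))/2)` converges;
equivalently, the infinite product `∏ (√(q j) + 1/√(q j))/2` converges. -/
theorem log_summable_of_sq_summable (q : ℕ → ℝ) (hq : ∀ j, 0 < q j)
    (h : Summable fun j => (q j - 1) ^ 2) :
    Summable (fun j => Real.log ((Real.sqrt (q j) + 1 / Real.sqrt (q j)) / 2)) ∧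
      Multipliable (fun j => (Real.sqrt (q j) + 1 / Real.sqrt (q j)) / 2) := by
  have hsum : Summable (fun j => Real.log ((Real.sqrt (q j) + 1 / Real.sqrt (q j)) / 2)) := by
    have htend := h.tendsto_atTop_zero
    obtain ⟨N, hN⟩ := (Metric.tendsto_atTop.mp htend) (1 / 4) (by norm_num)
    rw [← summable_nat_add_iff N]
    have hb : Summable (fun j => (q (j + N) - 1) ^ 2) :=
      (summable_nat_add_iff N).mpr h
    refine Summable.of_nonneg_of_le (fun j => aux_log_nonneg (hq (j + N))) (fun j => ?_) hb
    apply aux_log_le (hq (j + N))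
    have := hN (j + N) (Nat.le_add_left N j)
    rw [Real.dist_eq, sub_zero] at this
    calc (q (j + N) - 1) ^ 2 ≤ |(q (j + N) - 1) ^ 2| := le_abs_self _
      _ ≤ 1 / 4 := this.le
  refine ⟨hsum, ?_⟩
  exact Real.multipliable_of_summable_log
    (fun n => aux_pos (hq n)) hsum
end
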